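/- arXiv:2311.09572 — 10 statements merged into one kernel-verified Lean document; each statement's English description precedes it below -/
import Mathlib

section
/- Let p > 1 with Hölder conjugate p̂, let ν₀, ν₁, ω ≥ 0, and let 0 < x < 1. For the geometric probability sequence τ_x(n) = (1-x)·x^n one has the exact evaluation Υ(τ_x) = (p̂/(1-x))·(ν₀·(1 - x^{1/p̂}) + ν₁·(x - x^{1/p})) + ω·x/(1-x) - (x/(1-x))·log x - log(1-x). -/
open Real

/-- The functional `Υ` evaluated on a probability sequence on `ℕ`. -/
noncomputable def Upsilon (ν₀ ν₁ ω p phat : ℝ) (lam : ℕ → ℝ) : ℝ :=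
  phat * ∑' n : ℕ,
      (ν₀ * ((n : ℝ) + 1) * (lam n - lam n ^ (1/p) * lam (n+1) ^ (1/phat))
        + ν₁ * (n : ℝ) * (lam n - lam n ^ (1/p) * lam (n-1) ^ (1/phat)))
    + ω * ∑' n : ℕ, (n : ℝ) * lam n
    - ∑' n : ℕ, lam n * Real.log (lam n)

/-- Exact evaluation of `Υ` on the geometric (thermal) probability sequence
`τ_x(n) = (1-x)·xⁿ`. -/
theorem Upsilon_geometric (p phat ν₀ ν₁ ω : ℝ)
    (hp : 1 < p) (hconj : 1/p + 1/phat = 1)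
    (hν₀ : 0 ≤ ν₀) (hν₁ : 0 ≤ ν₁) (hω : 0 ≤ ω)
    (x : ℝ) (hx0 : 0 < x) (hx1 : x < 1) :
    Upsilon ν₀ ν₁ ω p phat (fun n => (1 - x) * x ^ n)
      = phat / (1 - x) * (ν₀ * (1 - x ^ (1/phat)) + ν₁ * (x - x ^ (1/p)))
        + ω * x / (1 - x) - x / (1 - x) * Real.log x - Real.log (1 - x) := by
  have h1x : 0 < 1 - x := by linarith
  have hxn : ∀ n : ℕ, (0:ℝ) ≤ x ^ n := fun n => pow_nonneg hx0.le n
  have hp0 : 0 < p := lt_trans one_pos hp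
  -- key product computation (real exponents)
  have hmul : ∀ a b : ℝ, ((1-x) * x ^ a) ^ (1/p) * ((1-x) * x ^ b) ^ (1/phat)
      = (1-x) * x ^ (a * (1/p) + b * (1/phat)) := by
    intro a b
    rw [Real.mul_rpow h1x.le (Real.rpow_nonneg hx0.le a),
        Real.mul_rpow h1x.le (Real.rpow_nonneg hx0.le b),
        ← Real.rpow_mul hx0.le, ← Real.rpow_mul hx0.le]
    calc (1-x) ^ (1/p) * x ^ (a * (1/p)) * ((1-x) ^ (1/phat) * x ^ (b * (1/phat)))
        = ((1-x) ^ (1/p) * (1-x) ^ (1/phat)) * (x ^ (a * (1/p)) * x ^ (b * (1/phat))) := by ring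
      _ = (1-x) ^ (1/p + 1/phat) * x ^ (a * (1/p) + b * (1/phat)) := by
          rw [← Real.rpow_add h1x, ← Real.rpow_add hx0]
      _ = (1-x) * x ^ (a * (1/p) + b * (1/phat)) := by rw [hconj, Real.rpow_one]
  -- abbreviations
  set u : ℝ := x ^ (1/phat) with hu
  set w : ℝ := x ^ (-(1/phat)) with hw
  have hxw : x * w = x ^ (1/p) := by
    rw [hw]
    nth_rewrite 1 [← Real.rpow_one x]
    rw [← Real.rpow_add hx0]
    congr 1
    linarith
  set C₀ : ℝ := ν₀ * (1-x) * (1 - u) with hC₀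
  set C₁ : ℝ := ν₁ * (1-x) * (1 - w) with hC₁
  -- pointwise simplification of the first summand
  have hterm : ∀ n : ℕ,
      (ν₀ * ((n : ℝ) + 1) * ((1-x) * x ^ n - ((1-x) * x ^ n) ^ (1/p) * ((1-x) * x ^ (n+1)) ^ (1/phat))
        + ν₁ * (n : ℝ) * ((1-x) * x ^ n - ((1-x) * x ^ n) ^ (1/p) * ((1-x) * x ^ (n-1)) ^ (1/phat)))
      = C₀ * x ^ n + (C₀ + C₁) * ((n : ℝ) * x ^ n) := by
    intro n
    have e1 : ((1-x) * x ^ n : ℝ) ^ (1/p) * ((1-x) * x ^ (n+1)) ^ (1/phat)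
        = (1-x) * (x ^ n * u) := by
      have := hmul (n : ℝ) ((n : ℝ) + 1)
      rw [Real.rpow_natCast] at this
      rw [show ((x:ℝ) ^ ((n:ℝ)+1)) = x ^ (n+1 : ℕ) by
            rw [← Real.rpow_natCast x (n+1)]; norm_num] at this
      rw [this]
      have hexp : (n : ℝ) * (1/p) + ((n : ℝ) + 1) * (1/phat) = (n : ℝ) + 1/phat := by
        have : (n:ℝ) * (1/p) + ((n:ℝ)+1) * (1/phat) = (n:ℝ) * (1/p + 1/phat) + 1/phat := by ring
        rw [this, hconj]; ring
      rw [hexp, Real.rpow_add hx0, Real.rpow_natCast, hu]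
    cases n with
    | zero => rw [e1, hC₀, hC₁]; push_cast; ring
    | succ m =>
      have e2 : ((1-x) * x ^ (m+1) : ℝ) ^ (1/p) * ((1-x) * x ^ (m+1-1)) ^ (1/phat)
          = (1-x) * (x ^ (m+1) * w) := by
        have := hmul ((m : ℝ) + 1) (m : ℝ)
        rw [show ((x:ℝ) ^ ((m:ℝ)+1)) = x ^ (m+1 : ℕ) by
              rw [← Real.rpow_natCast x (m+1)]; norm_num,
            Real.rpow_natCast x m] at this
        rw [show (m+1-1 : ℕ) = m from rfl, this]
        have hexp : ((m : ℝ) + 1) * (1/p) + (m : ℝ) * (1/phat) = ((m : ℝ) + 1) + (-(1/phat)) := by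
          have h2 : ((m:ℝ)+1) * (1/p) + (m:ℝ) * (1/phat) = ((m:ℝ)+1) * (1/p + 1/phat) - 1/phat := by
            ring
          rw [h2, hconj]; ring
        rw [hexp, Real.rpow_add hx0, hw]
        rw [show ((x:ℝ) ^ ((m:ℝ)+1)) = x ^ (m+1 : ℕ) by
              rw [← Real.rpow_natCast x (m+1)]; norm_num]
      rw [e1, e2]
      push_cast
      rw [hC₀, hC₁]
      ring
  -- summability facts
  have hs1 : Summable (fun n : ℕ => x ^ n) := summable_geometric_of_lt_one hx0.le hx1
  have hs2 : Summable (fun n : ℕ => (n : ℝ) * x ^ n) := by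
    have := summable_pow_mul_geometric_of_norm_lt_one (R := ℝ) 1
      (r := x) (by rw [Real.norm_eq_abs, abs_of_pos hx0]; exact hx1)
    simpa using this
  have ht1 : ∑' n : ℕ, x ^ n = (1 - x)⁻¹ := tsum_geometric_of_lt_one hx0.le hx1
  have ht2 : ∑' n : ℕ, (n : ℝ) * x ^ n = x / (1 - x)^2 :=
    tsum_coe_mul_geometric_of_norm_lt_one (by rw [Real.norm_eq_abs, abs_of_pos hx0]; exact hx1)
  -- value of the first sum
  have hsum1 : ∑' n : ℕ,
      (ν₀ * ((n : ℝ) + 1) * ((1-x) * x ^ n - ((1-x) * x ^ n) ^ (1/p) * ((1-x) * x ^ (n+1)) ^ (1/phat))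
        + ν₁ * (n : ℝ) * ((1-x) * x ^ n - ((1-x) * x ^ n) ^ (1/p) * ((1-x) * x ^ (n-1)) ^ (1/phat)))
      = C₀ * (1 - x)⁻¹ + (C₀ + C₁) * (x / (1 - x)^2) := by
    rw [tsum_congr hterm, Summable.tsum_add (hs1.mul_left _) (hs2.mul_left _),
        tsum_mul_left, tsum_mul_left, ht1, ht2]
  -- value of the ω-sum
  have hsum2 : ∑' n : ℕ, (n : ℝ) * ((1-x) * x ^ n) = (1 - x) * (x / (1 - x)^2) := by
    rw [tsum_congr (fun n : ℕ => show (n : ℝ) * ((1-x) * x ^ n) = (1-x) * ((n:ℝ) * x ^ n) by ring),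
        tsum_mul_left, ht2]
  -- value of the entropy sum
  have hlog : ∀ n : ℕ, ((1-x) * x ^ n) * Real.log ((1-x) * x ^ n)
      = ((1-x) * Real.log (1-x)) * x ^ n + ((1-x) * Real.log x) * ((n:ℝ) * x ^ n) := by
    intro n
    rw [Real.log_mul h1x.ne' (by positivity), Real.log_pow]
    ring
  have hsum3 : ∑' n : ℕ, ((1-x) * x ^ n) * Real.log ((1-x) * x ^ n)
      = ((1-x) * Real.log (1-x)) * (1 - x)⁻¹ + ((1-x) * Real.log x) * (x / (1 - x)^2) := by
    rw [tsum_congr hlog, Summable.tsum_add (hs1.mul_left _) (hs2.mul_left _),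
        tsum_mul_left, tsum_mul_left, ht1, ht2]
  -- put everything together
  simp only [Upsilon]
  rw [hsum1, hsum2, hsum3]
  rw [← hxw, hC₀, hC₁, hu]
  field_simp
  ring
end

section
/- Let p > 1 with Hölder conjugate p̂ and let λ be a probability sequence on ℕ with finite mean ∑ n·λ(n) < ∞, such that the series ∑ (n+1)·λ(n)^{1/p}·λ(n+1)^{1/p̂} converges. Set s_ℓ := ∑_{n=ℓ}^∞ λ(n). Then ∑_{ℓ=0}^∞ (s_ℓ - s_ℓ^{1/p}·s_{ℓ+1}^{1/p̂}) ≤ ∑_{n=0}^∞ (n+1)·(λ(n) - λ(n)^{1/p}·λ(n+1)^{1/p̂}). -/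
open Real

/-- Tail sums `s_ℓ = ∑_{n=ℓ}^∞ λ(n)` of a sequence. -/
noncomputable def tailSum (lam : ℕ → ℝ) (ℓ : ℕ) : ℝ := ∑' n : ℕ, lam (ℓ + n)

/-- Fubini for the tail-sum double series with nonnegative terms. -/
lemma tailSum_fubini (f : ℕ → ℝ) (hf : ∀ n, 0 ≤ f n)
    (h : Summable (fun n : ℕ => ((n : ℝ) + 1) * f n)) :
    Summable (fun ℓ : ℕ => ∑' n : ℕ, f (ℓ + n)) ∧
      ∑' ℓ : ℕ, ∑' n : ℕ, f (ℓ + n) = ∑' n : ℕ, ((n : ℝ) + 1) * f n := by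
  set F : ℕ × ℕ → ℝ := fun q => f (q.1 + q.2) with hF
  have hFnn : ∀ q, 0 ≤ F q := fun q => hf _
  -- summability over the product via the antidiagonal sigma decomposition
  have hfiber : ∀ n : ℕ, ∀ u : (Finset.HasAntidiagonal.antidiagonal n),
      F (Finset.HasAntidiagonal.sigmaAntidiagonalEquivProd ⟨n, u⟩) = f n := by
    intro n u
    have hu : (u : ℕ × ℕ).1 + (u : ℕ × ℕ).2 = n := Finset.HasAntidiagonal.mem_antidiagonal.mp u.2
    simp [hF, Finset.HasAntidiagonal.sigmaAntidiagonalEquivProd, hu]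
  have hfibersum : ∀ n : ℕ,
      ∑' u : (Finset.HasAntidiagonal.antidiagonal n),
        F (Finset.HasAntidiagonal.sigmaAntidiagonalEquivProd ⟨n, u⟩) = ((n : ℝ) + 1) * f n := by
    intro n
    rw [tsum_congr (hfiber n), tsum_fintype, Finset.sum_const, Finset.card_univ,
      Fintype.card_coe, Finset.Nat.card_antidiagonal, nsmul_eq_mul]
    push_cast
    ring
  have hsigma : Summable (fun x : (Σ n : ℕ, (Finset.HasAntidiagonal.antidiagonal n : Finset (ℕ × ℕ))) =>
      F (Finset.HasAntidiagonal.sigmaAntidiagonalEquivProd x)) := by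
    rw [summable_sigma_of_nonneg (fun x => hFnn _)]
    constructor
    · intro n; exact .of_finite
    · exact h.congr fun n => (hfibersum n).symm
  have hFsum : Summable F := (Equiv.summable_iff _).mp hsigma
  have hslice : ∀ ℓ : ℕ, Summable fun n : ℕ => F (ℓ, n) :=
    fun ℓ => hFsum.prod_factor ℓ
  have hSumm : Summable (fun ℓ : ℕ => ∑' n : ℕ, f (ℓ + n)) := by
    have := (summable_prod_of_nonneg hFnn).mp hFsum
    exact this.2
  refine ⟨hSumm, ?_⟩
  have h1 : ∑' ℓ : ℕ, ∑' n : ℕ, f (ℓ + n) = ∑' q, F q :=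
    (hFsum.tsum_prod' hslice).symm
  have h2 : ∑' q, F q = ∑' n : ℕ, ((n : ℝ) + 1) * f n := by
    rw [← Finset.HasAntidiagonal.sigmaAntidiagonalEquivProd.tsum_eq F]
    rw [hsigma.tsum_sigma' (fun n => .of_finite)]
    exact tsum_congr hfibersum
  rw [h1, h2]

/-- The Hölder-type inequality relating tail sums to the original sequence, used in the
proof of the meta log-Sobolev inequality. -/
theorem tailSum_holder_ineq (p phat : ℝ) (hp : 1 < p) (hconj : 1/p + 1/phat = 1)
    (lam : ℕ → ℝ) (hnn : ∀ n, 0 ≤ lam n) (hsum : HasSum lam 1)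
    (hmean : Summable (fun n : ℕ => (n : ℝ) * lam n))
    (h3 : Summable (fun n : ℕ => ((n : ℝ) + 1) * lam n ^ (1/p) * lam (n+1) ^ (1/phat))) :
    ∑' ℓ : ℕ, (tailSum lam ℓ - tailSum lam ℓ ^ (1/p) * tailSum lam (ℓ+1) ^ (1/phat))
      ≤ ∑' n : ℕ, ((n : ℝ) + 1) * (lam n - lam n ^ (1/p) * lam (n+1) ^ (1/phat)) := by
  have hpq : p.HolderConjugate phat := Real.holderConjugate_iff.mpr ⟨hp, by rw [← one_div, ← one_div]; exact hconj⟩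
  have hsl : Summable lam := hsum.summable
  set g : ℕ → ℝ := fun n => lam n ^ (1/p) * lam (n+1) ^ (1/phat) with hg
  have hgnn : ∀ n, 0 ≤ g n := fun n =>
    mul_nonneg (Real.rpow_nonneg (hnn n) _) (Real.rpow_nonneg (hnn _) _)
  have h3' : Summable (fun n : ℕ => ((n : ℝ) + 1) * g n) := by
    exact h3.congr fun n => by rw [hg]; ring
  have hmean1 : Summable (fun n : ℕ => ((n : ℝ) + 1) * lam n) := by
    have := hmean.add hsl
    exact this.congr fun n => by ring
  have hgsum : Summable g :=
    Summable.of_nonneg_of_le hgnn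
      (fun n => le_mul_of_one_le_left (hgnn n) (by have := Nat.cast_nonneg (α := ℝ) n; linarith)) h3'
  -- Fubini for lam and g
  obtain ⟨hS, hSval⟩ := tailSum_fubini lam hnn hmean1
  obtain ⟨hU, hUval⟩ := tailSum_fubini g hgnn h3'
  set S : ℕ → ℝ := fun ℓ => tailSum lam ℓ with hSdef
  have hS' : Summable S := hS.congr fun ℓ => rfl
  have hSval' : ∑' ℓ : ℕ, S ℓ = ∑' n : ℕ, ((n : ℝ) + 1) * lam n := by
    rw [show S = fun ℓ : ℕ => ∑' n : ℕ, lam (ℓ + n) from rfl]; exact hSval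
  set U : ℕ → ℝ := fun ℓ => ∑' n : ℕ, g (ℓ + n) with hUdef
  have hSnn : ∀ ℓ, 0 ≤ S ℓ := fun ℓ => tsum_nonneg fun n => hnn _
  have hslice : ∀ ℓ : ℕ, Summable fun n : ℕ => lam (ℓ + n) :=
    fun ℓ => hsl.comp_injective (add_right_injective ℓ)
  -- rpow power identities
  have hp0 : p ≠ 0 := hpq.ne_zero
  have hq0 : phat ≠ 0 := hpq.symm.ne_zero
  have hpow : ∀ x : ℝ, 0 ≤ x → (x ^ (1/p)) ^ p = x := by
    intro x hx
    rw [← Real.rpow_mul hx, one_div, inv_mul_cancel₀ hp0, Real.rpow_one]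
  have hqow : ∀ x : ℝ, 0 ≤ x → (x ^ (1/phat)) ^ phat = x := by
    intro x hx
    rw [← Real.rpow_mul hx, one_div, inv_mul_cancel₀ hq0, Real.rpow_one]
  -- Hölder per ℓ : U ℓ ≤ S ℓ ^ (1/p) * S (ℓ+1) ^ (1/phat)
  have hHolder : ∀ ℓ : ℕ, U ℓ ≤ S ℓ ^ (1/p) * S (ℓ+1) ^ (1/phat) := by
    intro ℓ
    have hA : Summable (fun i : ℕ => (lam (ℓ + i) ^ (1/p)) ^ p) :=
      (hslice ℓ).congr fun i => (hpow _ (hnn _)).symm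
    have hB : Summable (fun i : ℕ => (lam (ℓ + i + 1) ^ (1/phat)) ^ phat) := by
      refine (hslice (ℓ+1)).congr fun i => ?_
      rw [hqow _ (hnn _)]
      congr 1
      omega
    have := inner_le_Lp_mul_Lq_tsum_of_nonneg hpq
      (f := fun i => lam (ℓ + i) ^ (1/p)) (g := fun i => lam (ℓ + i + 1) ^ (1/phat))
      (fun i => Real.rpow_nonneg (hnn _) _) (fun i => Real.rpow_nonneg (hnn _) _) hA hB
    have hle := this
    have hUeq : U ℓ = ∑' i : ℕ, lam (ℓ + i) ^ (1/p) * lam (ℓ + i + 1) ^ (1/phat) := by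
      refine tsum_congr fun i => ?_
      simp only [hg]
    have hAe : ∑' i : ℕ, (lam (ℓ + i) ^ (1/p)) ^ p = S ℓ := by
      refine tsum_congr fun i => hpow _ (hnn _)
    have hBe : ∑' i : ℕ, (lam (ℓ + i + 1) ^ (1/phat)) ^ phat = S (ℓ+1) := by
      show _ = ∑' n : ℕ, lam (ℓ + 1 + n)
      refine tsum_congr fun i => ?_
      rw [hqow _ (hnn _)]
      congr 1
      omega
    rw [hUeq]
    calc ∑' i : ℕ, lam (ℓ + i) ^ (1/p) * lam (ℓ + i + 1) ^ (1/phat)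
        ≤ (∑' i : ℕ, (lam (ℓ + i) ^ (1/p)) ^ p) ^ (1/p) *
            (∑' i : ℕ, (lam (ℓ + i + 1) ^ (1/phat)) ^ phat) ^ (1/phat) := hle
      _ = S ℓ ^ (1/p) * S (ℓ+1) ^ (1/phat) := by rw [hAe, hBe]
  -- tails are monotone
  have hmono : ∀ ℓ : ℕ, S (ℓ+1) ≤ S ℓ := by
    intro ℓ
    have h0 : S ℓ = lam ℓ + S (ℓ+1) := by
      show (∑' n : ℕ, lam (ℓ + n)) = lam ℓ + ∑' n : ℕ, lam (ℓ + 1 + n)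
      rw [(hslice ℓ).tsum_eq_zero_add]
      have e1 : lam (ℓ + 0) = lam ℓ := by norm_num
      have e2 : (∑' n : ℕ, lam (ℓ + (n + 1))) = ∑' n : ℕ, lam (ℓ + 1 + n) :=
        tsum_congr fun n => by congr 1; omega
      rw [e1, e2]
    rw [h0]
    have := hnn ℓ
    linarith
  -- the summand on the left is nonnegative and bounded by S ℓ - U ℓ
  have hbound : ∀ ℓ : ℕ, S ℓ - S ℓ ^ (1/p) * S (ℓ+1) ^ (1/phat) ≤ S ℓ - U ℓ := by
    intro ℓ
    have := hHolder ℓ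
    linarith
  have hub : ∀ ℓ : ℕ, S ℓ ^ (1/p) * S (ℓ+1) ^ (1/phat) ≤ S ℓ := by
    intro ℓ
    calc S ℓ ^ (1/p) * S (ℓ+1) ^ (1/phat)
        ≤ S ℓ ^ (1/p) * S ℓ ^ (1/phat) := by
          apply mul_le_mul_of_nonneg_left
          · exact Real.rpow_le_rpow (hSnn _) (hmono ℓ) (le_of_lt hpq.symm.one_div_pos)
          · exact Real.rpow_nonneg (hSnn _) _
      _ = S ℓ ^ (1/p + 1/phat) := (Real.rpow_add' (hSnn ℓ) (by rw [hconj]; norm_num)).symm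
      _ = S ℓ := by rw [hconj, Real.rpow_one]
  have hannn : ∀ ℓ : ℕ, 0 ≤ S ℓ - S ℓ ^ (1/p) * S (ℓ+1) ^ (1/phat) :=
    fun ℓ => sub_nonneg.mpr (hub ℓ)
  have hasum : Summable (fun ℓ : ℕ => S ℓ - S ℓ ^ (1/p) * S (ℓ+1) ^ (1/phat)) := by
    refine Summable.of_nonneg_of_le hannn (fun ℓ => ?_) hS'
    have : 0 ≤ S ℓ ^ (1/p) * S (ℓ+1) ^ (1/phat) :=
      mul_nonneg (Real.rpow_nonneg (hSnn _) _) (Real.rpow_nonneg (hSnn _) _)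
    linarith
  have hSU : Summable (fun ℓ : ℕ => S ℓ - U ℓ) := hS'.sub hU
  have hmain : ∑' ℓ : ℕ, (S ℓ - S ℓ ^ (1/p) * S (ℓ+1) ^ (1/phat))
      ≤ ∑' ℓ : ℕ, (S ℓ - U ℓ) := Summable.tsum_le_tsum hbound hasum hSU
  have hrhs : ∑' ℓ : ℕ, (S ℓ - U ℓ)
      = ∑' n : ℕ, ((n : ℝ) + 1) * (lam n - lam n ^ (1/p) * lam (n+1) ^ (1/phat)) := by
    rw [Summable.tsum_sub hS' hU, hSval', hUval, ← Summable.tsum_sub hmean1 h3']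
    refine tsum_congr fun n => ?_
    rw [hg]
    ring
  calc ∑' ℓ : ℕ, (tailSum lam ℓ - tailSum lam ℓ ^ (1/p) * tailSum lam (ℓ+1) ^ (1/phat))
      = ∑' ℓ : ℕ, (S ℓ - S ℓ ^ (1/p) * S (ℓ+1) ^ (1/phat)) := rfl
    _ ≤ ∑' ℓ : ℕ, (S ℓ - U ℓ) := hmain
    _ = _ := hrhs
end

section
/- Let λ be a probability sequence on ℕ with λ(n) > 0 for all n, and let ℓ ∈ ℕ. Assume the series ∑_{n=ℓ}^∞ λ(n)·(log λ(n) - log λ(n+1)) converges. Then -s_ℓ·log(s_{ℓ+1}/s_ℓ) ≤ ∑_{n=ℓ}^∞ λ(n)·(log λ(n) - log λ(n+1)), where s_ℓ := ∑_{n=ℓ}^∞ λ(n). -/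
open Real

/-- The `p = 1` limiting case of the Hölder inequality used in the proof of the meta
log-Sobolev inequality: `-s_ℓ·log(s_{ℓ+1}/s_ℓ) ≤ ∑_{n=ℓ}^∞ λ(n)·(log λ(n) - log λ(n+1))`. -/
theorem tailSum_log_ineq (lam : ℕ → ℝ) (hpos : ∀ n, 0 < lam n) (hsum : HasSum lam 1)
    (ℓ : ℕ)
    (hconv : Summable (fun k : ℕ =>
      lam (ℓ + k) * (Real.log (lam (ℓ + k)) - Real.log (lam (ℓ + k + 1))))) :
    -(tailSum lam ℓ) * Real.log (tailSum lam (ℓ+1) / tailSum lam ℓ)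
      ≤ ∑' k : ℕ, lam (ℓ + k) * (Real.log (lam (ℓ + k)) - Real.log (lam (ℓ + k + 1))) := by
  have hlam : Summable lam := hsum.summable
  have ha : Summable (fun k : ℕ => lam (ℓ + k)) :=
    hlam.comp_injective (add_right_injective ℓ)
  have hb : Summable (fun k : ℕ => lam (ℓ + k + 1)) := by
    have : Summable (fun k : ℕ => lam ((ℓ + 1) + k)) :=
      hlam.comp_injective (add_right_injective (ℓ + 1))
    refine this.congr fun k => ?_
    ring_nf
  set A := tailSum lam ℓ with hAdef
  set B := tailSum lam (ℓ + 1) with hBdef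
  have hAsum : HasSum (fun k : ℕ => lam (ℓ + k)) A := ha.hasSum
  have hBsum : HasSum (fun k : ℕ => lam (ℓ + k + 1)) B := by
    have : HasSum (fun k : ℕ => lam ((ℓ + 1) + k)) B :=
      (hlam.comp_injective (add_right_injective (ℓ + 1))).hasSum
    refine this.congr_fun fun k => ?_
    congr 1
    ring
  have hApos : 0 < A := by
    rw [hAdef, tailSum]
    exact Summable.tsum_pos ha (fun n => (hpos _).le) 0 (hpos _)
  have hBpos : 0 < B := by
    have := hBsum.tsum_eq
    rw [← this]
    exact Summable.tsum_pos hb (fun n => (hpos _).le) 0 (hpos _)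
  -- pointwise bound
  have key : ∀ k : ℕ,
      -(lam (ℓ + k) * (Real.log (lam (ℓ + k)) - Real.log (lam (ℓ + k + 1)))) ≤
        lam (ℓ + k) * (Real.log B - Real.log A)
          + lam (ℓ + k + 1) * (A / B) - lam (ℓ + k) := by
    intro k
    set a := lam (ℓ + k) with hadef
    set b := lam (ℓ + k + 1) with hbdef
    have hapos : 0 < a := hpos _
    have hbpos : 0 < b := hpos _
    have hx : 0 < b * A / (a * B) := by positivity
    have hlog := Real.log_le_sub_one_of_pos hx
    have hlogeq : Real.log (b * A / (a * B)) =
        Real.log b + Real.log A - (Real.log a + Real.log B) := by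
      rw [Real.log_div (by positivity) (by positivity),
        Real.log_mul (ne_of_gt hbpos) (ne_of_gt hApos),
        Real.log_mul (ne_of_gt hapos) (ne_of_gt hBpos)]
    rw [hlogeq] at hlog
    have h2 := mul_le_mul_of_nonneg_left hlog hapos.le
    have heq : a * (b * A / (a * B) - 1) = b * (A / B) - a := by
      field_simp
    rw [heq] at h2
    nlinarith [h2]
  -- summability of RHS
  have hrs : Summable (fun k : ℕ =>
      lam (ℓ + k) * (Real.log B - Real.log A)
        + lam (ℓ + k + 1) * (A / B) - lam (ℓ + k)) :=
    ((ha.mul_right _).add (hb.mul_right _)).sub ha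
  have hsum_le := Summable.tsum_le_tsum key hconv.neg hrs
  rw [tsum_neg] at hsum_le
  have hRHSsum : HasSum (fun k : ℕ =>
      lam (ℓ + k) * (Real.log B - Real.log A)
        + lam (ℓ + k + 1) * (A / B) - lam (ℓ + k))
      (A * (Real.log B - Real.log A) + B * (A / B) - A) :=
    ((hAsum.mul_right _).add (hBsum.mul_right _)).sub hAsum
  have hRHSval : (∑' k : ℕ,
      (lam (ℓ + k) * (Real.log B - Real.log A)
        + lam (ℓ + k + 1) * (A / B) - lam (ℓ + k)))
      = A * (Real.log B - Real.log A) := by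
    rw [hRHSsum.tsum_eq]
    field_simp
    ring
  rw [hRHSval] at hsum_le
  have hlogBA : Real.log (B / A) = Real.log B - Real.log A :=
    Real.log_div (ne_of_gt hBpos) (ne_of_gt hApos)
  rw [hlogBA]
  nlinarith [hsum_le]
end

section
/- Let λ be a probability sequence on ℕ with λ(n) > 0 for all n, such that the series ∑ λ(n)·log λ(n) converges and s_k·log s_k → 0 as k → ∞, where s_ℓ := ∑_{n=ℓ}^∞ λ(n). Set x_ℓ := s_{ℓ+1}/s_ℓ (so x_ℓ ∈ (0,1) for every ℓ). Then ∑_{ℓ=0}^∞ s_ℓ·(x_ℓ·log x_ℓ + (1-x_ℓ)·log(1-x_ℓ)) = ∑_{ℓ=0}^∞ λ(ℓ)·log λ(ℓ). -/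
open Real Filter

/-- Telescoping identity: the chain rule for the Shannon entropy of an `ℕ`-valued random
variable written via the sequence of conditional binary choices `x_ℓ = s_{ℓ+1}/s_ℓ`. -/
theorem entropy_chain_rule (lam : ℕ → ℝ) (hpos : ∀ n, 0 < lam n) (hsum : HasSum lam 1)
    (h2 : Summable (fun n : ℕ => lam n * Real.log (lam n)))
    (htail : Tendsto (fun k : ℕ => tailSum lam k * Real.log (tailSum lam k)) atTop (nhds 0)) :
    ∑' ℓ : ℕ, tailSum lam ℓ *
        ((tailSum lam (ℓ+1) / tailSum lam ℓ) * Real.log (tailSum lam (ℓ+1) / tailSum lam ℓ)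
          + (1 - tailSum lam (ℓ+1) / tailSum lam ℓ)
            * Real.log (1 - tailSum lam (ℓ+1) / tailSum lam ℓ))
      = ∑' ℓ : ℕ, lam ℓ * Real.log (lam ℓ) := by
  set s : ℕ → ℝ := tailSum lam with hs_def
  set F : ℕ → ℝ := fun ℓ => s ℓ *
      ((s (ℓ+1) / s ℓ) * Real.log (s (ℓ+1) / s ℓ)
        + (1 - s (ℓ+1) / s ℓ) * Real.log (1 - s (ℓ+1) / s ℓ)) with hF_def
  have hsummable : Summable lam := hsum.summable
  have hshift : ∀ ℓ, Summable (fun n => lam (ℓ + n)) := by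
    intro ℓ
    have := (summable_nat_add_iff ℓ).mpr hsummable
    simpa [add_comm] using this
  have hspos : ∀ ℓ, 0 < s ℓ := fun ℓ =>
    Summable.tsum_pos (hshift ℓ) (fun n => (hpos _).le) 0 (hpos _)
  have hrec : ∀ ℓ, s ℓ = lam ℓ + s (ℓ+1) := by
    intro ℓ
    have h := Summable.tsum_eq_zero_add (hshift ℓ)
    have h1 : (fun n => lam (ℓ + (n+1))) = fun n => lam ((ℓ+1) + n) := by
      funext n; congr 1; omega
    simp only [add_zero] at h
    rw [h1] at h
    simpa [hs_def, tailSum] using h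
  have hs0 : s 0 = 1 := by
    simp only [hs_def, tailSum, zero_add]
    exact hsum.tsum_eq
  -- pointwise identity
  have hkey : ∀ ℓ, F ℓ = lam ℓ * Real.log (lam ℓ)
      + (s (ℓ+1) * Real.log (s (ℓ+1)) - s ℓ * Real.log (s ℓ)) := by
    intro ℓ
    have hs := hspos ℓ
    have ht := hspos (ℓ+1)
    have ha := hpos ℓ
    have hr := hrec ℓ
    have h1 : 1 - s (ℓ+1) / s ℓ = lam ℓ / s ℓ := by
      field_simp
      linarith
    have hs' : lam ℓ + s (ℓ+1) ≠ 0 := by positivity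
    rw [hF_def]
    simp only
    rw [h1, Real.log_div ht.ne' hs.ne', Real.log_div ha.ne' hs.ne', hr]
    field_simp
    ring
  -- F is nonpositive
  have hFle : ∀ ℓ, F ℓ ≤ 0 := by
    intro ℓ
    have hs := hspos ℓ
    have ht := hspos (ℓ+1)
    have ha := hpos ℓ
    have hx0 : 0 < s (ℓ+1) / s ℓ := div_pos ht hs
    have hx1 : s (ℓ+1) / s ℓ < 1 := by
      rw [div_lt_one hs]
      linarith [hrec ℓ]
    have hlog1 : Real.log (s (ℓ+1) / s ℓ) ≤ 0 := Real.log_nonpos hx0.le hx1.le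
    have hlog2 : Real.log (1 - s (ℓ+1) / s ℓ) ≤ 0 := by
      apply Real.log_nonpos <;> linarith
    have : (s (ℓ+1) / s ℓ) * Real.log (s (ℓ+1) / s ℓ)
        + (1 - s (ℓ+1) / s ℓ) * Real.log (1 - s (ℓ+1) / s ℓ) ≤ 0 := by
      nlinarith
    rw [hF_def]
    simp only
    nlinarith
  -- partial sums of F
  have hpartial : ∀ N, ∑ ℓ ∈ Finset.range N, F ℓ
      = (∑ ℓ ∈ Finset.range N, lam ℓ * Real.log (lam ℓ))
        + (s N * Real.log (s N) - s 0 * Real.log (s 0)) := by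
    intro N
    calc ∑ ℓ ∈ Finset.range N, F ℓ
        = ∑ ℓ ∈ Finset.range N, (lam ℓ * Real.log (lam ℓ)
            + (s (ℓ+1) * Real.log (s (ℓ+1)) - s ℓ * Real.log (s ℓ))) := by
          exact Finset.sum_congr rfl fun ℓ _ => hkey ℓ
      _ = (∑ ℓ ∈ Finset.range N, lam ℓ * Real.log (lam ℓ))
            + ∑ ℓ ∈ Finset.range N,
              (s (ℓ+1) * Real.log (s (ℓ+1)) - s ℓ * Real.log (s ℓ)) := by
          rw [Finset.sum_add_distrib]
      _ = _ := by rw [Finset.sum_range_sub (fun ℓ => s ℓ * Real.log (s ℓ)) N]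
  have hg0 : s 0 * Real.log (s 0) = 0 := by rw [hs0]; simp
  -- partial sums of F tend to T
  set T : ℝ := ∑' ℓ, lam ℓ * Real.log (lam ℓ) with hT
  have htendF : Tendsto (fun N => ∑ ℓ ∈ Finset.range N, F ℓ) atTop (nhds T) := by
    have h1 : Tendsto (fun N => ∑ ℓ ∈ Finset.range N, lam ℓ * Real.log (lam ℓ))
        atTop (nhds T) := h2.hasSum.tendsto_sum_nat
    have h2' : Tendsto (fun N : ℕ => s N * Real.log (s N) - s 0 * Real.log (s 0))
        atTop (nhds 0) := by
      rw [hg0]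
      simpa using htail
    have := h1.add h2'
    rw [add_zero] at this
    exact this.congr fun N => (hpartial N).symm
  have hHasSum : HasSum F T := by
    have hneg : HasSum (fun ℓ => -F ℓ) (-T) := by
      rw [hasSum_iff_tendsto_nat_of_nonneg (fun ℓ => neg_nonneg.mpr (hFle ℓ))]
      have := htendF.neg
      exact this.congr fun N => by simp [Finset.sum_neg_distrib]
    simpa using hneg.neg
  exact hHasSum.tsum_eq
end

section
/- Let β > 0 and 1 < p ≤ 2 with Hölder conjugate p̂, and set α_p := (p·p̂/(4β))·e^{β/2}·(1 - e^{-β/p})·(1 - e^{-β/p̂}). Then the limit as y → 1⁻ of the quotient [p·p̂·e^{β/2}·(y^{2/p} - e^{-β/p})·(y^{2/p̂} - e^{-β/p̂})] / [4·d(y²‖e^{-β})] equals α_p. (This quotient is the ratio E_p(τ)/D(τ‖σ_β) for the geometric probability sequence τ with parameter y², and the limit shows that the constant α_p in the p-log-Sobolev inequality is optimal.) -/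
open Real Filter

/-- Binary relative entropy `d(a‖b)`. -/
noncomputable def binRelEnt (a b : ℝ) : ℝ :=
  a * Real.log (a / b) + (1 - a) * Real.log ((1 - a) / (1 - b))

/-- Optimality of the constant `α_p`: the ratio `E_p(τ)/D(τ‖σ_β)` for the geometric
probability sequence `τ` with parameter `y²` tends to `α_p` as `y → 1⁻`. -/
theorem alpha_p_optimal (β p phat : ℝ) (hβ : 0 < β)
    (hp1 : 1 < p) (hp2 : p ≤ 2) (hconj : 1/p + 1/phat = 1) :
    Tendsto (fun y : ℝ =>
        p * phat * Real.exp (β/2) * (y ^ (2/p) - Real.exp (-β/p))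
            * (y ^ (2/phat) - Real.exp (-β/phat))
          / (4 * binRelEnt (y^2) (Real.exp (-β))))
      (nhdsWithin 1 (Set.Ioo (0:ℝ) 1))
      (nhds (p * phat / (4 * β) * Real.exp (β/2) * (1 - Real.exp (-β/p))
        * (1 - Real.exp (-β/phat)))) := by
  have hb1 : Real.exp (-β) < 1 := by
    rw [exp_lt_one_iff]; linarith
  have hb0 : (0:ℝ) < Real.exp (-β) := exp_pos _
  -- numerator limit
  have hrp : ∀ c : ℝ, Tendsto (fun y : ℝ => y ^ c) (nhdsWithin 1 (Set.Ioo (0:ℝ) 1)) (nhds 1) := by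
    intro c
    have := (Real.continuousAt_rpow_const 1 c (Or.inl one_ne_zero)).continuousWithinAt
      (s := Set.Ioo (0:ℝ) 1)
    simpa [ContinuousWithinAt, Real.one_rpow] using this
  have hnum : Tendsto (fun y : ℝ =>
      p * phat * Real.exp (β/2) * (y ^ (2/p) - Real.exp (-β/p))
          * (y ^ (2/phat) - Real.exp (-β/phat)))
      (nhdsWithin 1 (Set.Ioo (0:ℝ) 1))
      (nhds (p * phat * Real.exp (β/2) * (1 - Real.exp (-β/p))
        * (1 - Real.exp (-β/phat)))) := by
    exact ((tendsto_const_nhds.mul ((hrp (2/p)).sub tendsto_const_nhds)).mul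
      ((hrp (2/phat)).sub tendsto_const_nhds))
  -- denominator limit
  have hsq : Tendsto (fun y : ℝ => y ^ 2) (nhdsWithin 1 (Set.Ioo (0:ℝ) 1)) (nhdsWithin 1 (Set.Ioo (0:ℝ) 1)) := by
    apply tendsto_nhdsWithin_of_tendsto_nhds_of_eventually_within
    · have : Tendsto (fun y : ℝ => y ^ 2) (nhds 1) (nhds ((1:ℝ)^2)) :=
        (continuous_pow 2).continuousAt
      simpa using this.mono_left nhdsWithin_le_nhds
    · filter_upwards [self_mem_nhdsWithin] with y hy
      exact ⟨pow_pos hy.1 2, by nlinarith [hy.1, hy.2]⟩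
  have hxlogx : Tendsto (fun a : ℝ => (1 - a) * Real.log (1 - a))
      (nhdsWithin 1 (Set.Ioo (0:ℝ) 1)) (nhds 0) := by
    have hc : Continuous fun a : ℝ => (1 - a) * Real.log (1 - a) :=
      Real.continuous_mul_log.comp (continuous_const.sub continuous_id)
    have := hc.continuousAt (x := (1:ℝ))
    simpa [ContinuousAt] using this.mono_left (nhdsWithin_le_nhds)
  have hbin : Tendsto (fun a : ℝ => binRelEnt a (Real.exp (-β)))
      (nhdsWithin 1 (Set.Ioo (0:ℝ) 1)) (nhds β) := by
    have h1 : Tendsto (fun a : ℝ => a * Real.log (a / Real.exp (-β)))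
        (nhdsWithin 1 (Set.Ioo (0:ℝ) 1)) (nhds β) := by
      have hc : ContinuousAt (fun a : ℝ => a * Real.log (a / Real.exp (-β))) 1 := by
        exact continuousAt_id.mul ((Real.continuousAt_log (by positivity)).comp
          (continuousAt_id.div continuousAt_const hb0.ne'))
      have := hc.continuousWithinAt (s := Set.Ioo (0:ℝ) 1)
      simpa [ContinuousWithinAt, Real.log_div one_ne_zero hb0.ne', Real.log_exp] using this
    have h2 : Tendsto (fun a : ℝ => (1 - a) * Real.log ((1 - a) / (1 - Real.exp (-β))))
        (nhdsWithin 1 (Set.Ioo (0:ℝ) 1)) (nhds 0) := by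
      have heq : ∀ᶠ a in nhdsWithin 1 (Set.Ioo (0:ℝ) 1),
          (1 - a) * Real.log ((1 - a) / (1 - Real.exp (-β)))
            = (1 - a) * Real.log (1 - a) - (1 - a) * Real.log (1 - Real.exp (-β)) := by
        filter_upwards [self_mem_nhdsWithin] with a ha
        rw [Real.log_div (by linarith [ha.2]) (by linarith)]
        ring
      have h3 : Tendsto (fun a : ℝ => (1 - a) * Real.log (1 - Real.exp (-β)))
          (nhdsWithin 1 (Set.Ioo (0:ℝ) 1)) (nhds 0) := by
        have : Tendsto (fun a : ℝ => (1 - a) * Real.log (1 - Real.exp (-β)))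
            (nhds 1) (nhds ((1 - 1) * Real.log (1 - Real.exp (-β)))) :=
          (Continuous.mul (continuous_const.sub continuous_id) continuous_const).continuousAt
        simpa using this.mono_left nhdsWithin_le_nhds
      have := hxlogx.sub h3
      rw [sub_zero] at this
      exact Tendsto.congr' (by filter_upwards [heq] with a ha using ha.symm) this
    have := h1.add h2
    rw [add_zero] at this
    exact this
  have hden : Tendsto (fun y : ℝ => 4 * binRelEnt (y^2) (Real.exp (-β)))
      (nhdsWithin 1 (Set.Ioo (0:ℝ) 1)) (nhds (4 * β)) :=
    tendsto_const_nhds.mul (hbin.comp hsq)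
  have hβ0 : (4:ℝ) * β ≠ 0 := by positivity
  have := hnum.div hden hβ0
  convert this using 2
  · rfl
  · ring
end

section
/- Let p > 1 with Hölder conjugate p̂ and fix y ∈ (0,1). Then the partial derivative (d/dx) φ(x,y) is strictly negative for every x ∈ (0,y) and strictly positive for every x ∈ (y,1). Consequently, for fixed y the function x ↦ φ(x,y) attains its minimum over (0,1) exactly at x = y, where φ(y,y) = 0. -/
open Real
set_option maxHeartbeats 2000000

/-- The function `φ(x,y)` encoding the `p`-log-Sobolev inequality for the quantum
Ornstein–Uhlenbeck semigroup evaluated on thermal states. -/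
noncomputable def phiFun (p phat x y : ℝ) : ℝ :=
  -((x ^ (2/p) - y ^ (2/p)) * (x ^ (2/phat) - y ^ (2/phat)) * Real.log (x ^ 2)) /
      ((1 - x ^ (2/p)) * (1 - x ^ (2/phat)))
    - binRelEnt (y ^ 2) (x ^ 2)

noncomputable def phiC1 (a b t u v : ℝ) : ℝ :=
  2*v*((1-u)*(1-v) + t*(a*u*(1-v) + b*(1-u))) / ((1-u)^2*(1-v)^2)

noncomputable def phiC2 (a b t u v : ℝ) : ℝ :=
  2*u*((1-u)*(1-v) + t*(b*v*(1-u) + a*(1-v))) / ((1-u)^2*(1-v)^2)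

noncomputable def phiC3 (a b t u v : ℝ) : ℝ :=
  (2*((1-u)*(1-v))^2 - (1-u*v)*(2*(1-u)*(1-v) + 2*t*(a*u*(1-v)+b*v*(1-u))))
    / (((1-u)*(1-v))^2*(1-u*v))

section SignLemmas

variable {a b t u v : ℝ}

lemma phiC1_neg (ha : 0 < a) (hb : 0 < b) (hu0 : 0 < u) (hu1 : u < 1)
    (hv0 : 0 < v) (hv1 : v < 1) (ht : t < 0) (hlv : b*t < v - 1) :
    phiC1 a b t u v < 0 := by
  have h1u : (0:ℝ) < 1 - u := by linarith
  have h1v : (0:ℝ) < 1 - v := by linarith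
  apply div_neg_of_neg_of_pos
  · have k1 : t*(a*u*(1-v)) < 0 := mul_neg_of_neg_of_pos ht (by positivity)
    have k2 : (1-u)*(b*t) < (1-u)*(v-1) := mul_lt_mul_of_pos_left hlv h1u
    have hX : (1-u)*(1-v) + t*(a*u*(1-v) + b*(1-u)) < 0 := by nlinarith
    nlinarith
  · positivity

lemma phiC2_neg (ha : 0 < a) (hb : 0 < b) (hu0 : 0 < u) (hu1 : u < 1)
    (hv0 : 0 < v) (hv1 : v < 1) (ht : t < 0) (hlu : a*t < u - 1) :
    phiC2 a b t u v < 0 := by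
  have h1u : (0:ℝ) < 1 - u := by linarith
  have h1v : (0:ℝ) < 1 - v := by linarith
  apply div_neg_of_neg_of_pos
  · have k1 : t*(b*v*(1-u)) < 0 := mul_neg_of_neg_of_pos ht (by positivity)
    have k2 : (1-v)*(a*t) < (1-v)*(u-1) := mul_lt_mul_of_pos_left hlu h1v
    have hX : (1-u)*(1-v) + t*(b*v*(1-u) + a*(1-v)) < 0 := by nlinarith
    nlinarith
  · positivity

lemma phiC3_pos (ha : 0 < a) (hb : 0 < b) (hu0 : 0 < u) (hu1 : u < 1)
    (hv0 : 0 < v) (hv1 : v < 1) (ht : t < 0)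
    (hlu : a*t < u - 1) (hlv : b*t < v - 1) :
    0 < phiC3 a b t u v := by
  have h1u : (0:ℝ) < 1 - u := by linarith
  have h1v : (0:ℝ) < 1 - v := by linarith
  have h1uv : (0:ℝ) < 1 - u*v := by nlinarith
  apply div_pos
  · have e1 : a*t*u < (u-1)*u := mul_lt_mul_of_pos_right hlu hu0
    have e2 : b*t*v < (v-1)*v := mul_lt_mul_of_pos_right hlv hv0
    have g1 : a*t*u*(1-v) < (u-1)*u*(1-v) := mul_lt_mul_of_pos_right e1 h1v
    have g2 : b*t*v*(1-u) < (v-1)*v*(1-u) := mul_lt_mul_of_pos_right e2 h1u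
    have g3 : (1-u*v) * (a*t*u*(1-v) + b*t*v*(1-u))
        < (1-u*v) * ((u-1)*u*(1-v) + (v-1)*v*(1-u)) :=
      mul_lt_mul_of_pos_left (by linarith) h1uv
    have m1 : 0 < (1-u)*(1-v)*(u*v)*(2-u-v) := by
      have : (0:ℝ) < 2 - u - v := by linarith
      positivity
    nlinarith [g3, m1]
  · positivity

lemma phiA_neg (ha : 0 < a) (hb : 0 < b) (hab : a + b = 2) (hu0 : 0 < u) (hu1 : u < 1)
    (hv0 : 0 < v) (hv1 : v < 1) (ht : t < 0)
    (hlu : a*t < u - 1) (hlv : b*t < v - 1) :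
    a * phiC1 a b t u v * u + b * phiC2 a b t u v * v + 2 * phiC3 a b t u v * (u*v) < 0 := by
  have hbeq : b = 2 - a := by linarith
  subst hbeq
  have h1u : (0:ℝ) < 1 - u := by linarith
  have h1v : (0:ℝ) < 1 - v := by linarith
  have h1uv : (0:ℝ) < 1 - u*v := by nlinarith
  have key : a * phiC1 a (2-a) t u v * u + (2-a) * phiC2 a (2-a) t u v * v
      + 2 * phiC3 a (2-a) t u v * (u*v)
      = 4*u*v*((1-u)*(1-v) + a*(2-a)*t*(1-u*v)) / ((1-u)*(1-v)*(1-u*v)) := by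
    unfold phiC1 phiC2 phiC3
    have n1 : (1:ℝ) - u ≠ 0 := h1u.ne'
    have n2 : (1:ℝ) - v ≠ 0 := h1v.ne'
    have n3 : (1:ℝ) - u*v ≠ 0 := h1uv.ne'
    have hD1 : ((1:ℝ)-u)^2*(1-v)^2 ≠ 0 := mul_ne_zero (pow_ne_zero 2 n1) (pow_ne_zero 2 n2)
    have hD3 : (((1:ℝ)-u)*(1-v))^2*(1-u*v) ≠ 0 := mul_ne_zero (pow_ne_zero 2 (mul_ne_zero n1 n2)) n3
    rw [mul_div_assoc', mul_div_assoc', mul_div_assoc', div_mul_eq_mul_div, div_mul_eq_mul_div,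
      div_mul_eq_mul_div, div_add_div _ _ hD1 hD1, div_add_div _ _ (mul_ne_zero hD1 hD1) hD3,
      div_eq_div_iff (mul_ne_zero (mul_ne_zero hD1 hD1) hD3) (mul_ne_zero (mul_ne_zero n1 n2) n3)]
    ring
  rw [key]
  apply div_neg_of_neg_of_pos
  · have e1 : (2-a)*(a*t) < (2-a)*(u-1) := mul_lt_mul_of_pos_left hlu hb
    have e2 : a*((2-a)*t) < a*(v-1) := mul_lt_mul_of_pos_left hlv ha
    have g : (2*(a*(2-a)*t))*(1-u*v) < ((2-a)*(u-1)+a*(v-1))*(1-u*v) :=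
      mul_lt_mul_of_pos_right (by linarith) h1uv
    have m : 0 < (2-a)*v*(1-u)^2 + a*u*(1-v)^2 := by positivity
    have hY : (1-u)*(1-v) + a*(2-a)*t*(1-u*v) < 0 := by nlinarith [g, m]
    exact mul_neg_of_pos_of_neg (by positivity) hY
  · positivity

lemma phiB_identity (hab : a + b = 2) (hu1 : u ≠ 1) (hv1 : v ≠ 1) (huv : u*v ≠ 1) :
    phiC1 a b t u v + phiC2 a b t u v + phiC3 a b t u v
      = phiC1 a b t u v * u + phiC2 a b t u v * v + phiC3 a b t u v * (u*v) := by
  have hbeq : b = 2 - a := by linarith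
  subst hbeq
  have h1u : (1:ℝ) - u ≠ 0 := by intro h; exact hu1 (by linarith)
  have h1v : (1:ℝ) - v ≠ 0 := by intro h; exact hv1 (by linarith)
  have h1uv : (1:ℝ) - u*v ≠ 0 := by intro h; exact huv (by linarith)
  unfold phiC1 phiC2 phiC3
  rw [div_add_div _ _ (by simp [*]) (by simp [*]), div_add_div _ _ (by simp [*]) (by simp [*]), div_mul_eq_mul_div, div_mul_eq_mul_div, div_mul_eq_mul_div, div_add_div _ _ (by simp [*]) (by simp [*]), div_add_div _ _ (by simp [*]) (by simp [*]), div_eq_div_iff (by simp [*]) (by simp [*])]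
  ring

end SignLemmas


lemma phi_hasDerivAt (p phat y x : ℝ) (hp : 0 < 2/p) (hphat : 0 < 2/phat)
    (hpc : 2/p + 2/phat = 2) (hy0 : 0 < y) (hy1 : y < 1) (hx0 : 0 < x) (hx1 : x < 1) :
    HasDerivAt (fun z => phiFun p phat z y)
      ((phiC1 (2/p) (2/phat) (Real.log x) (x^(2/p)) (x^(2/phat)) * (y^(2/p) - x^(2/p))
        + phiC2 (2/p) (2/phat) (Real.log x) (x^(2/p)) (x^(2/phat)) * (y^(2/phat) - x^(2/phat))
        + phiC3 (2/p) (2/phat) (Real.log x) (x^(2/p)) (x^(2/phat)) * (y^2 - x^2)) / x) x := by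
  set a := 2/p with ha_def
  set b := 2/phat with hb_def
  have ha : 0 < a := hp
  have hb : 0 < b := hphat
  have hab : a + b = 2 := hpc
  have hu0 : 0 < x ^ a := Real.rpow_pos_of_pos hx0 a
  have hv0 : 0 < x ^ b := Real.rpow_pos_of_pos hx0 b
  have hu1 : x ^ a < 1 := Real.rpow_lt_one hx0.le hx1 ha
  have hv1 : x ^ b < 1 := Real.rpow_lt_one hx0.le hx1 hb
  have h1u : (0:ℝ) < 1 - x ^ a := by linarith
  have h1v : (0:ℝ) < 1 - x ^ b := by linarith
  have h1x2 : (0:ℝ) < 1 - x^2 := by nlinarith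
  have h1y2 : (0:ℝ) < 1 - y^2 := by nlinarith
  have hDne : ((1:ℝ) - x ^ a) * (1 - x ^ b) ≠ 0 := by positivity
  -- derivative builders
  have hXa : HasDerivAt (fun z : ℝ => z ^ a) (a * x ^ (a-1)) x :=
    Real.hasDerivAt_rpow_const (Or.inl hx0.ne')
  have hXb : HasDerivAt (fun z : ℝ => z ^ b) (b * x ^ (b-1)) x :=
    Real.hasDerivAt_rpow_const (Or.inl hx0.ne')
  have hlog' : HasDerivAt (fun z : ℝ => 2 * Real.log z) (2 * x⁻¹) x :=
    (Real.hasDerivAt_log hx0.ne').const_mul 2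
  have hN := ((hXa.sub_const (y^a)).mul (hXb.sub_const (y^b))).mul hlog'
  have hDD := (hXa.const_sub 1).mul (hXb.const_sub 1)
  have hQ := (hN.neg).div hDD hDne
  have hE2 := (hlog'.const_sub (Real.log (y^2))).const_mul (y^2)
  have h1mx : HasDerivAt (fun z : ℝ => 1 - z^2) (-(2*x)) x := by
    have := (hasDerivAt_pow 2 x).const_sub 1
    refine this.congr_deriv (Eq.symm ?_)
    push_cast; ring
  have hlg2 : HasDerivAt (fun z : ℝ => Real.log (1 - z^2)) (-(2*x) / (1 - x^2)) x :=
    h1mx.log (by positivity)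
  have hE3 := (hlg2.const_sub (Real.log (1 - y^2))).const_mul ((1:ℝ) - y^2)
  have hg := hQ.sub (hE2.add hE3)
  have heq : (fun z => phiFun p phat z y) =ᶠ[nhds x]
      (fun z : ℝ => -((z ^ a - y ^ a) * (z ^ b - y ^ b) * (2 * Real.log z)) /
          ((1 - z ^ a) * (1 - z ^ b))
        - ((y^2) * (Real.log (y^2) - 2 * Real.log z)
            + (1 - y^2) * (Real.log (1 - y^2) - Real.log (1 - z^2)))) := by
    filter_upwards [Ioo_mem_nhds hx0 hx1] with z hz
    obtain ⟨hz0, hz1⟩ := hz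
    have h1z2 : (0:ℝ) < 1 - z^2 := by nlinarith
    simp only [phiFun, binRelEnt, ← ha_def, ← hb_def]
    rw [Real.log_div (by positivity) (by positivity),
        Real.log_div (by positivity) (by positivity),
        Real.log_pow, Real.log_pow]
    push_cast
    ring
  have hmain := hg.congr_of_eventuallyEq heq
  refine hmain.congr_deriv (Eq.symm ?_)
  simp only [Pi.mul_apply, Pi.neg_apply]
  simp only [phiC1, phiC2, phiC3]
  have hxbv : x ^ b = x^2 / x ^ a := by
    rw [eq_div_iff hu0.ne']
    rw [← Real.rpow_add hx0]
    rw [show b + a = ((2:ℕ):ℝ) by push_cast; linarith]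
    rw [Real.rpow_natCast]
  have hy2 : (y:ℝ)^2 = y ^ a * y ^ b := by
    rw [← Real.rpow_add hy0]
    rw [show a + b = ((2:ℕ):ℝ) by push_cast; linarith]
    rw [Real.rpow_natCast]
  rw [hy2]
  simp only [Real.rpow_sub hx0, Real.rpow_one]
  rw [hxbv]
  have hune : x ^ a ≠ 0 := hu0.ne'
  have h1une : (1:ℝ) - x ^ a ≠ 0 := h1u.ne'
  have h1x2ne : (1:ℝ) - x^2 ≠ 0 := h1x2.ne'
  have hcross : x ^ a - x^2 ≠ 0 := by
    have : x ^ a - x ^ 2 = x ^ a * (1 - x ^ b) := by rw [hxbv]; field_simp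
    rw [this]
    exact mul_ne_zero hune h1v.ne'
  field_simp
  ring


/-- Sign of `(d/dx) φ(x,y)`: strictly negative on `(0,y)`, strictly positive on `(y,1)`.
Consequently `x ↦ φ(x,y)` attains its minimum over `(0,1)` exactly at `x = y`,
where `φ(y,y) = 0`. -/
theorem phi_deriv_sign_and_min (p phat : ℝ) (hp : 1 < p) (hconj : 1/p + 1/phat = 1)
    (y : ℝ) (hy : y ∈ Set.Ioo (0:ℝ) 1) :
    (∀ x : ℝ, 0 < x → x < y → deriv (fun t => phiFun p phat t y) x < 0)
    ∧ (∀ x : ℝ, y < x → x < 1 → 0 < deriv (fun t => phiFun p phat t y) x)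
    ∧ phiFun p phat y y = 0
    ∧ (∀ x : ℝ, x ∈ Set.Ioo (0:ℝ) 1 → x ≠ y → 0 < phiFun p phat x y) := by
  obtain ⟨hy0, hy1⟩ := hy
  have hp0 : 0 < p := lt_trans one_pos hp
  have hinvp1 : 1/p < 1 := by rw [div_lt_one hp0]; exact hp
  have hiphat : 0 < 1/phat := by
    have : 0 < 1/p := by positivity
    linarith
  have hphat0 : 0 < phat := one_div_pos.mp hiphat
  have ha : 0 < 2/p := by positivity
  have hb : 0 < 2/phat := by positivity
  have hpc : 2/p + 2/phat = 2 := by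
    have h2 : 2/p + 2/phat = 2*(1/p + 1/phat) := by ring
    rw [h2, hconj]; norm_num
  have ha2 : 2/p < 2 := by linarith
  have hb2 : 2/phat < 2 := by linarith
  have h1y2 : (0:ℝ) < 1 - y^2 := by nlinarith
  -- master signed-derivative fact
  have master : ∀ x : ℝ, 0 < x → x < 1 →
      (x < y → deriv (fun z => phiFun p phat z y) x < 0) ∧
      (y < x → 0 < deriv (fun z => phiFun p phat z y) x) := by
    intro x hx0 hx1
    have hd := phi_hasDerivAt p phat y x ha hb hpc hy0 hy1 hx0 hx1
    set a := 2/p with ha_def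
    set b := 2/phat with hb_def
    set t := Real.log x with ht_def
    set u := x ^ a with hu_def
    set v := x ^ b with hv_def
    have hu0 : 0 < u := Real.rpow_pos_of_pos hx0 a
    have hv0 : 0 < v := Real.rpow_pos_of_pos hx0 b
    have hu1 : u < 1 := Real.rpow_lt_one hx0.le hx1 ha
    have hv1 : v < 1 := Real.rpow_lt_one hx0.le hx1 hb
    have htneg : t < 0 := Real.log_neg hx0 hx1
    have hlu : a*t < u - 1 := by
      have h1 : Real.log u = a * t := Real.log_rpow hx0 a
      have h2 : Real.log u < u - 1 := Real.log_lt_sub_one_of_pos hu0 hu1.ne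
      linarith
    have hlv : b*t < v - 1 := by
      have h1 : Real.log v = b * t := Real.log_rpow hx0 b
      have h2 : Real.log v < v - 1 := Real.log_lt_sub_one_of_pos hv0 hv1.ne
      linarith
    set C1 := phiC1 a b t u v with hC1_def
    set C2 := phiC2 a b t u v with hC2_def
    set C3 := phiC3 a b t u v with hC3_def
    have hC1 : C1 < 0 := phiC1_neg ha hb hu0 hu1 hv0 hv1 htneg hlv
    have hC2 : C2 < 0 := phiC2_neg ha hb hu0 hu1 hv0 hv1 htneg hlu
    have hC3 : 0 < C3 := phiC3_pos ha hb hu0 hu1 hv0 hv1 htneg hlu hlv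
    have hA : a * C1 * u + b * C2 * v + 2 * C3 * (u*v) < 0 :=
      phiA_neg ha hb hpc hu0 hu1 hv0 hv1 htneg hlu hlv
    have hx2uv : x^2 = u*v := by
      rw [hu_def, hv_def, ← Real.rpow_add hx0,
        show a + b = ((2:ℕ):ℝ) by push_cast; linarith, Real.rpow_natCast]
    set Q : ℝ → ℝ := fun z => C1 * z^a + C2 * z^b + C3 * z^2 with hQ_def
    set W : ℝ → ℝ := fun z => a*C1*z^(a-2) + b*C2*z^(b-2) + 2*C3 with hW_def
    have hQd : ∀ z : ℝ, 0 < z → HasDerivAt Q (z * W z) z := by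
      intro z hz
      have h1 : HasDerivAt (fun w : ℝ => w ^ a) (a * z^(a-1)) z :=
        Real.hasDerivAt_rpow_const (Or.inl hz.ne')
      have h2 : HasDerivAt (fun w : ℝ => w ^ b) (b * z^(b-1)) z :=
        Real.hasDerivAt_rpow_const (Or.inl hz.ne')
      have h3 := hasDerivAt_pow 2 z
      have h := ((h1.const_mul C1).add (h2.const_mul C2)).add (h3.const_mul C3)
      refine h.congr_deriv (Eq.symm ?_)
      have e1 : z ^ (a-1) = z^(a-2) * z := by
        rw [show a-1 = (a-2)+1 by ring, Real.rpow_add_one hz.ne']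
      have e2 : z ^ (b-1) = z^(b-2) * z := by
        rw [show b-1 = (b-2)+1 by ring, Real.rpow_add_one hz.ne']
      rw [hW_def]
      simp only [e1, e2]
      push_cast
      ring
    have hWlt : ∀ z1 z2 : ℝ, 0 < z1 → z1 < z2 → W z1 < W z2 := by
      intro z1 z2 hz1 h12
      have ea : z2 ^ (a-2) < z1 ^ (a-2) :=
        Real.rpow_lt_rpow_of_neg hz1 h12 (by linarith)
      have eb : z2 ^ (b-2) < z1 ^ (b-2) :=
        Real.rpow_lt_rpow_of_neg hz1 h12 (by linarith)
      have haC1 : a*C1 < 0 := mul_neg_of_pos_of_neg ha hC1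
      have hbC2 : b*C2 < 0 := mul_neg_of_pos_of_neg hb hC2
      have m1 := mul_lt_mul_of_neg_left ea haC1
      have m2 := mul_lt_mul_of_neg_left eb hbC2
      rw [hW_def]
      dsimp only
      linarith
    have hWx : W x < 0 := by
      have exa : x ^ (a-2) = u/(u*v) := by
        rw [Real.rpow_sub hx0, show (2:ℝ) = ((2:ℕ):ℝ) by push_cast; ring,
          Real.rpow_natCast, hx2uv]
      have exb : x ^ (b-2) = v/(u*v) := by
        rw [Real.rpow_sub hx0, show (2:ℝ) = ((2:ℕ):ℝ) by push_cast; ring,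
          Real.rpow_natCast, hx2uv]
      have hWval : W x = (a*C1*u + b*C2*v + 2*C3*(u*v))/(u*v) := by
        rw [hW_def]
        dsimp only
        rw [exa, exb]
        field_simp
        try ring
      rw [hWval]
      exact div_neg_of_neg_of_pos hA (by positivity)
    have hQ1x : Q 1 = Q x := by
      have huv1 : u*v < 1 := by nlinarith
      have hB := phiB_identity (a := a) (b := b) (t := t) hpc hu1.ne hv1.ne huv1.ne
      have e1 : Q 1 = C1 + C2 + C3 := by
        rw [hQ_def]; dsimp only; rw [Real.one_rpow, Real.one_rpow]; ring
      have e2 : Q x = C1*u + C2*v + C3*(u*v) := by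
        rw [hQ_def]; dsimp only; rw [hx2uv]; try ring
      rw [e1, e2]
      exact hB
    have hder_eq : deriv (fun z => phiFun p phat z y) x = (Q y - Q x)/x := by
      rw [hd.deriv]
      congr 1
      rw [hQ_def]
      dsimp only
      rw [hx2uv]
      ring
    have hQcont : ∀ s : Set ℝ, (∀ z ∈ s, 0 < z) → ContinuousOn Q s := by
      intro s hs z hz
      exact ((hQd z (hs z hz)).continuousAt).continuousWithinAt
    constructor
    · -- x < y : deriv < 0
      intro hxy
      rw [hder_eq]
      apply div_neg_of_neg_of_pos _ hx0
      rw [sub_neg]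
      rcases le_or_gt (W y) 0 with hWy | hWy
      · have hanti : StrictAntiOn Q (Set.Icc x y) := by
          apply strictAntiOn_of_deriv_neg (convex_Icc x y)
          · exact hQcont _ (fun z hz => lt_of_lt_of_le hx0 hz.1)
          · intro z hz
            rw [interior_Icc] at hz
            have hz0 : 0 < z := lt_trans hx0 hz.1
            rw [(hQd z hz0).deriv]
            exact mul_neg_of_pos_of_neg hz0 (lt_of_lt_of_le (hWlt z y hz0 hz.2) hWy)
        exact hanti (Set.left_mem_Icc.mpr hxy.le) (Set.right_mem_Icc.mpr hxy.le) hxy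
      · have hmono : StrictMonoOn Q (Set.Icc y 1) := by
          apply strictMonoOn_of_deriv_pos (convex_Icc y 1)
          · exact hQcont _ (fun z hz => lt_of_lt_of_le hy0 hz.1)
          · intro z hz
            rw [interior_Icc] at hz
            have hz0 : 0 < z := lt_trans hy0 hz.1
            rw [(hQd z hz0).deriv]
            exact mul_pos hz0 (lt_trans hWy (hWlt y z hy0 hz.1))
        have := hmono (Set.left_mem_Icc.mpr hy1.le) (Set.right_mem_Icc.mpr hy1.le) hy1
        rw [hQ1x] at this
        exact this
    · -- y < x : deriv > 0
      intro hyx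
      rw [hder_eq]
      apply div_pos _ hx0
      rw [sub_pos]
      have hanti : StrictAntiOn Q (Set.Icc y x) := by
        apply strictAntiOn_of_deriv_neg (convex_Icc y x)
        · exact hQcont _ (fun z hz => lt_of_lt_of_le hy0 hz.1)
        · intro z hz
          rw [interior_Icc] at hz
          have hz0 : 0 < z := lt_trans hy0 hz.1
          rw [(hQd z hz0).deriv]
          exact mul_neg_of_pos_of_neg hz0 (lt_trans (hWlt z x hz0 hz.2) hWx)
      exact hanti (Set.left_mem_Icc.mpr hyx.le) (Set.right_mem_Icc.mpr hyx.le) hyx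
  have hval : phiFun p phat y y = 0 := by
    unfold phiFun binRelEnt
    rw [div_self (by positivity : ((y:ℝ)^2) ≠ 0), div_self h1y2.ne', Real.log_one]
    simp
  refine ⟨fun x hx0 hxy => (master x hx0 (lt_trans hxy hy1)).1 hxy,
    fun x hyx hx1 => (master x (lt_trans hy0 hyx) hx1).2 hyx, hval, ?_⟩
  intro x hx hxy
  obtain ⟨hx0, hx1⟩ := hx
  have hcont : ∀ s : Set ℝ, (∀ z ∈ s, 0 < z ∧ z < 1) →
      ContinuousOn (fun z => phiFun p phat z y) s := by
    intro s hs z hz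
    obtain ⟨h1, h2⟩ := hs z hz
    exact ((phi_hasDerivAt p phat y z ha hb hpc hy0 hy1 h1 h2).continuousAt).continuousWithinAt
  rcases lt_or_gt_of_ne hxy with h | h
  · -- x < y : φ strictly decreasing on [x,y], φ x > φ y = 0
    have hanti : StrictAntiOn (fun z => phiFun p phat z y) (Set.Icc x y) := by
      apply strictAntiOn_of_deriv_neg (convex_Icc x y)
      · exact hcont _ (fun z hz => ⟨lt_of_lt_of_le hx0 hz.1, lt_of_le_of_lt hz.2 hy1⟩)
      · intro z hz
        rw [interior_Icc] at hz
        exact (master z (lt_trans hx0 hz.1) (lt_trans hz.2 hy1)).1 hz.2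
    have := hanti (Set.left_mem_Icc.mpr h.le) (Set.right_mem_Icc.mpr h.le) h
    simpa [hval] using this
  · -- y < x
    have hmono : StrictMonoOn (fun z => phiFun p phat z y) (Set.Icc y x) := by
      apply strictMonoOn_of_deriv_pos (convex_Icc y x)
      · exact hcont _ (fun z hz => ⟨lt_of_lt_of_le hy0 hz.1, lt_of_le_of_lt hz.2 hx1⟩)
      · intro z hz
        rw [interior_Icc] at hz
        exact (master z (lt_trans hy0 hz.1) (lt_trans hz.2 hx1)).2 hz.1
    have := hmono (Set.left_mem_Icc.mpr h.le) (Set.right_mem_Icc.mpr h.le) h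
    simpa [hval] using this
end

section
/- Let k ∈ ℕ and let ψ_0, …, ψ_k be an orthonormal family of k+1 vectors in ℓ²(ℕ,ℂ). Then ∑_{j=0}^{k} ∑_{n=0}^{∞} n·|ψ_j(n)|² ≥ k·(k+1)/2, where the left-hand side is interpreted as a value in [0,∞]. (Equivalently: the infimum over rank-(k+1) orthogonal projections Q of the trace of Q against the number operator equals 0 + 1 + ⋯ + k, attained by the projection onto the first k+1 Fock basis vectors.) -/
open scoped ENNReal

/-- Any orthonormal family of `k+1` vectors in `ℓ²(ℕ,ℂ)` has total number-operator
expectation at least `0 + 1 + ⋯ + k = k(k+1)/2`; the minimum is attained by the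
projection onto the first `k+1` Fock basis vectors. -/
theorem number_operator_trace_lower_bound (k : ℕ)
    (ψ : Fin (k+1) → lp (fun _ : ℕ => ℂ) 2) (hψ : Orthonormal ℂ ψ) :
    ((k : ℝ≥0∞) * ((k : ℝ≥0∞) + 1)) / 2
      ≤ ∑ j : Fin (k+1), ∑' n : ℕ, (n : ℝ≥0∞) * (‖(ψ j : ∀ _ : ℕ, ℂ) n‖₊ : ℝ≥0∞) ^ 2 := by
  classical
  have htwo : (0 : ℝ) < (2 : ℝ≥0∞).toReal := by norm_num
  set p : ℕ → ℝ≥0∞ := fun n => ∑ j : Fin (k+1), (‖(ψ j : ∀ _ : ℕ, ℂ) n‖₊ : ℝ≥0∞) ^ 2 with hpdef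
  -- each coefficient as ofReal
  have hcoeff : ∀ (j : Fin (k+1)) (n : ℕ),
      (‖(ψ j : ∀ _ : ℕ, ℂ) n‖₊ : ℝ≥0∞) ^ 2 = ENNReal.ofReal (‖(ψ j : ∀ _ : ℕ, ℂ) n‖ ^ 2) := by
    intro j n
    rw [ENNReal.ofReal_pow (norm_nonneg _), ofReal_norm, enorm_eq_nnnorm]
  -- Bessel: p n ≤ 1
  have hp1 : ∀ n, p n ≤ 1 := by
    intro n
    have e : lp (fun _ : ℕ => ℂ) 2 := lp.single 2 n (1 : ℂ)
    have hb := hψ.sum_inner_products_le (s := Finset.univ)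
      ((lp.single 2 n (1 : ℂ) : lp (fun _ : ℕ => ℂ) 2))
    have hsingle : ‖(lp.single 2 n (1 : ℂ) : lp (fun _ : ℕ => ℂ) 2)‖ = 1 := by
      have h1 := lp.norm_single (E := fun _ : ℕ => ℂ) (p := 2) (by norm_num) n (1 : ℂ)
      simpa using h1
    have hinner : ∀ j : Fin (k+1),
        ‖(inner ℂ (ψ j) ((lp.single 2 n (1 : ℂ) : lp (fun _ : ℕ => ℂ) 2)) : ℂ)‖
          = ‖(ψ j : ∀ _ : ℕ, ℂ) n‖ := by
      intro j
      rw [lp.inner_single_right]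
      simp [RCLike.inner_apply]
    rw [hsingle] at hb
    simp only [hinner, one_pow] at hb
    have : p n = ENNReal.ofReal (∑ j : Fin (k+1), ‖(ψ j : ∀ _ : ℕ, ℂ) n‖ ^ 2) := by
      rw [ENNReal.ofReal_sum_of_nonneg (fun j _ => by positivity)]
      exact Finset.sum_congr rfl fun j _ => hcoeff j n
    rw [this]
    calc ENNReal.ofReal (∑ j : Fin (k+1), ‖(ψ j : ∀ _ : ℕ, ℂ) n‖ ^ 2)
        ≤ ENNReal.ofReal 1 := ENNReal.ofReal_le_ofReal hb
      _ = 1 := ENNReal.ofReal_one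
  -- each ψ j has total weight 1
  have hnorm : ∀ j : Fin (k+1), ∑' n : ℕ, (‖(ψ j : ∀ _ : ℕ, ℂ) n‖₊ : ℝ≥0∞) ^ 2 = 1 := by
    intro j
    have hhs := lp.hasSum_norm htwo (ψ j)
    have hto : (2 : ℝ≥0∞).toReal = (2 : ℝ) := by norm_num
    rw [hto] at hhs
    have hsum : Summable fun n : ℕ => ‖(ψ j : ∀ _ : ℕ, ℂ) n‖ ^ (2 : ℝ) := hhs.summable
    have htsum : ∑' n : ℕ, ‖(ψ j : ∀ _ : ℕ, ℂ) n‖ ^ (2 : ℝ) = 1 := by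
      rw [hhs.tsum_eq, hψ.1 j, Real.one_rpow]
    have hrw : ∀ x : ℝ, 0 ≤ x → x ^ (2 : ℝ) = x ^ (2 : ℕ) := fun x hx => by
      rw [← Real.rpow_natCast x 2]; norm_num
    calc ∑' n : ℕ, (‖(ψ j : ∀ _ : ℕ, ℂ) n‖₊ : ℝ≥0∞) ^ 2
        = ∑' n : ℕ, ENNReal.ofReal (‖(ψ j : ∀ _ : ℕ, ℂ) n‖ ^ (2 : ℝ)) := by
          refine tsum_congr fun n => ?_
          rw [hcoeff j n, hrw _ (norm_nonneg _)]
      _ = ENNReal.ofReal (∑' n : ℕ, ‖(ψ j : ∀ _ : ℕ, ℂ) n‖ ^ (2 : ℝ)) :=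
          (ENNReal.ofReal_tsum_of_nonneg (fun n => Real.rpow_nonneg (norm_nonneg _) _) hsum).symm
      _ = 1 := by rw [htsum, ENNReal.ofReal_one]
  -- total mass of p
  have hptot : ∑' n : ℕ, p n = (k : ℝ≥0∞) + 1 := by
    rw [hpdef]
    rw [Summable.tsum_finsetSum (fun j _ => ENNReal.summable)]
    simp [hnorm]
  -- rewrite RHS as a single tsum
  have hRHS : ∑ j : Fin (k+1), ∑' n : ℕ, (n : ℝ≥0∞) * (‖(ψ j : ∀ _ : ℕ, ℂ) n‖₊ : ℝ≥0∞) ^ 2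
      = ∑' n : ℕ, (n : ℝ≥0∞) * p n := by
    rw [← Summable.tsum_finsetSum (fun j _ => ENNReal.summable)]
    exact tsum_congr fun n => by rw [hpdef, Finset.mul_sum]
  rw [hRHS]
  -- layer-cake: n * p n = ∑' m, ite (m < n)
  have hlayer : ∀ n : ℕ, (n : ℝ≥0∞) * p n = ∑' m : ℕ, if m < n then p n else 0 := by
    intro n
    rw [tsum_eq_sum (s := Finset.range n) (fun m hm => by
      rw [Finset.mem_range] at hm; simp [hm])]
    rw [Finset.sum_congr rfl (fun m hm => if_pos (Finset.mem_range.mp hm))]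
    simp [mul_comm]
  calc ((k : ℝ≥0∞) * ((k : ℝ≥0∞) + 1)) / 2
      ≤ ∑' m : ℕ, ∑' n : ℕ, (if m < n then p n else 0) := by
        -- lower bound each tail sum
        have hT : ∀ m : ℕ, ((k - m : ℕ) : ℝ≥0∞) ≤ ∑' n : ℕ, (if m < n then p n else 0) := by
          intro m
          have hsplit : ∑' n : ℕ, p n
              = (∑' n : ℕ, (if m < n then p n else 0)) + ∑' n : ℕ, (if m < n then 0 else p n) := by
            rw [← ENNReal.tsum_add]
            exact tsum_congr fun n => by by_cases h : m < n <;> simp [h]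
          have hhead : ∑' n : ℕ, (if m < n then 0 else p n) ≤ (m : ℝ≥0∞) + 1 := by
            rw [tsum_eq_sum (s := Finset.range (m+1)) (fun n hn => by
              rw [Finset.mem_range, Nat.lt_succ_iff, Nat.not_le] at hn
              simp [hn])]
            calc ∑ n ∈ Finset.range (m+1), (if m < n then 0 else p n)
                ≤ ∑ n ∈ Finset.range (m+1), 1 := by
                  refine Finset.sum_le_sum fun n _ => ?_
                  by_cases h : m < n <;> simp [h, hp1 n]
              _ = (m : ℝ≥0∞) + 1 := by simp
          have hle : (k : ℝ≥0∞) + 1 ≤ (∑' n : ℕ, (if m < n then p n else 0)) + ((m : ℝ≥0∞) + 1) := by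
            rw [← hptot, hsplit]
            exact add_le_add_right hhead _
          have hfin := tsub_le_iff_right.mpr hle
          calc ((k - m : ℕ) : ℝ≥0∞)
              = (((k+1) - (m+1) : ℕ) : ℝ≥0∞) := by congr 1; omega
            _ = ((k+1 : ℕ) : ℝ≥0∞) - ((m+1 : ℕ) : ℝ≥0∞) := ENNReal.natCast_sub _ _
            _ = (k : ℝ≥0∞) + 1 - ((m : ℝ≥0∞) + 1) := by push_cast; rfl
            _ ≤ _ := hfin
        calc ((k : ℝ≥0∞) * ((k : ℝ≥0∞) + 1)) / 2
            ≤ ∑ m ∈ Finset.range (k+1), ((k - m : ℕ) : ℝ≥0∞) := by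
              rw [ENNReal.div_le_iff (by norm_num) (by norm_num)]
              have hnat : (∑ m ∈ Finset.range (k+1), (k - m)) * 2 = k * (k + 1) := by
                have h := Finset.sum_range_reflect (fun j => j) (k+1)
                simp only [Nat.add_sub_cancel] at h
                have h2 := Finset.sum_range_id_mul_two (k+1)
                simp only [Nat.add_sub_cancel] at h2
                rw [h, h2, Nat.mul_comm]
              have heq : (k : ℝ≥0∞) * ((k : ℝ≥0∞) + 1)
                  = (∑ m ∈ Finset.range (k+1), ((k - m : ℕ) : ℝ≥0∞)) * 2 := by
                calc (k : ℝ≥0∞) * ((k : ℝ≥0∞) + 1)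
                    = ((k * (k + 1) : ℕ) : ℝ≥0∞) := by push_cast; ring
                  _ = (((∑ m ∈ Finset.range (k+1), (k - m)) * 2 : ℕ) : ℝ≥0∞) := by rw [hnat]
                  _ = (∑ m ∈ Finset.range (k+1), ((k - m : ℕ) : ℝ≥0∞)) * 2 := by push_cast; ring
              exact le_of_eq heq
          _ ≤ ∑' m : ℕ, ∑' n : ℕ, (if m < n then p n else 0) :=
              le_trans (Finset.sum_le_sum fun m _ => hT m) (ENNReal.sum_le_tsum _)
    _ = ∑' n : ℕ, (n : ℝ≥0∞) * p n := by
        rw [ENNReal.tsum_comm]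
        exact tsum_congr fun n => (hlayer n).symm
end

section
/- Let ν₀, ν₁ ≥ 0 and define g : (0,1) → ℝ by g(x) := ν₁ - ν₀ + (1-x)·(ν₁·x - ν₀)/(x·log x). Then g is monotone nonincreasing on (0,1); moreover, if ν₀ > 0 then g is strictly decreasing on (0,1). -/
open Real

/-- The critical-point function `g` of the entropy-production functional of single-mode
phase-covariant Gaussian semigroups evaluated on thermal states. -/
noncomputable def gFun (ν₀ ν₁ : ℝ) (x : ℝ) : ℝ :=
  ν₁ - ν₀ + (1 - x) * (ν₁ * x - ν₀) / (x * Real.log x)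

lemma gFun_hasDerivAt (ν₀ ν₁ : ℝ) {x : ℝ} (hx : x ∈ Set.Ioo (0:ℝ) 1) :
    HasDerivAt (gFun ν₀ ν₁)
      (((-(ν₁ * x - ν₀) + (1 - x) * ν₁) * (x * Real.log x)
        - (1 - x) * (ν₁ * x - ν₀) * (Real.log x + 1)) / (x * Real.log x) ^ 2) x := by
  obtain ⟨hx0, hx1⟩ := hx
  have hL : Real.log x < 0 := Real.log_neg hx0 hx1
  have hD : x * Real.log x ≠ 0 := mul_ne_zero (ne_of_gt hx0) (ne_of_lt hL)
  have hN : HasDerivAt (fun y : ℝ => (1 - y) * (ν₁ * y - ν₀))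
      ((-1) * (ν₁ * x - ν₀) + (1 - x) * ν₁) x := by
    have h1 : HasDerivAt (fun y : ℝ => 1 - y) (-1) x := by
      exact ((hasDerivAt_const x (1:ℝ)).sub (hasDerivAt_id x)).congr_deriv (by ring)
    have h2 : HasDerivAt (fun y : ℝ => ν₁ * y - ν₀) ν₁ x := by
      exact (((hasDerivAt_id x).const_mul ν₁).sub (hasDerivAt_const x ν₀)).congr_deriv (by ring)
    exact h1.mul h2
  have hDen : HasDerivAt (fun y : ℝ => y * Real.log y) (Real.log x + 1) x := by
    have := (hasDerivAt_id x).mul (Real.hasDerivAt_log (ne_of_gt hx0))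
    have hx' : x * x⁻¹ = 1 := mul_inv_cancel₀ (ne_of_gt hx0)
    exact this.congr_deriv (by simp only [id_eq, one_mul, hx'])
  have hdiv := hN.div hDen hD
  unfold gFun
  refine (hdiv.const_add (ν₁ - ν₀)).congr_deriv ?_
  ring

/-- `g` is monotone nonincreasing on `(0,1)`, and strictly decreasing there if `ν₀ > 0`. -/
theorem gFun_antitone (ν₀ ν₁ : ℝ) (hν₀ : 0 ≤ ν₀) (hν₁ : 0 ≤ ν₁) :
    AntitoneOn (gFun ν₀ ν₁) (Set.Ioo 0 1)
    ∧ (0 < ν₀ → StrictAntiOn (gFun ν₀ ν₁) (Set.Ioo 0 1)) := by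
  have hint : interior (Set.Ioo (0:ℝ) 1) = Set.Ioo 0 1 := interior_Ioo
  have hcont : ContinuousOn (gFun ν₀ ν₁) (Set.Ioo 0 1) := fun x hx =>
    (gFun_hasDerivAt ν₀ ν₁ hx).differentiableAt.continuousAt.continuousWithinAt
  have hdiff : DifferentiableOn ℝ (gFun ν₀ ν₁) (interior (Set.Ioo (0:ℝ) 1)) := by
    rw [hint]
    exact fun x hx => (gFun_hasDerivAt ν₀ ν₁ hx).differentiableAt.differentiableWithinAt
  -- key sign facts
  have key : ∀ x ∈ Set.Ioo (0:ℝ) 1, deriv (gFun ν₀ ν₁) x ≤ 0 ∧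
      (0 < ν₀ → deriv (gFun ν₀ ν₁) x < 0) := by
    intro x hx
    obtain ⟨hx0, hx1⟩ := hx
    have hL : Real.log x < 0 := Real.log_neg hx0 hx1
    set L := Real.log x with hLdef
    have hd := (gFun_hasDerivAt ν₀ ν₁ ⟨hx0, hx1⟩).deriv
    have hB : L + 1 - x < 0 := by
      have := Real.log_lt_sub_one_of_pos hx0 (ne_of_lt hx1)
      linarith
    have hA : x - 1 - x * L < 0 := by
      have h1 : (0:ℝ) < x⁻¹ := inv_pos.mpr hx0
      have h2 : Real.log x⁻¹ < x⁻¹ - 1 := by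
        apply Real.log_lt_sub_one_of_pos h1
        intro h
        rw [inv_eq_one] at h
        exact (ne_of_lt hx1) h
      rw [Real.log_inv] at h2
      have h3 : x * (-L) < x * (x⁻¹ - 1) := by
        exact (mul_lt_mul_iff_right₀ hx0).mpr h2
      have h4 : x * (x⁻¹ - 1) = 1 - x := by
        field_simp
      nlinarith
    have hnum : ((-(ν₁ * x - ν₀) + (1 - x) * ν₁) * (x * L)
        - (1 - x) * (ν₁ * x - ν₀) * (L + 1))
        = ν₁ * (x * (x - 1 - x * L)) + ν₀ * (L + 1 - x) := by ring
    have h1 : ν₁ * (x * (x - 1 - x * L)) ≤ 0 :=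
      mul_nonpos_of_nonneg_of_nonpos hν₁
        (mul_nonpos_of_nonneg_of_nonpos hx0.le hA.le)
    have hD2 : 0 < (x * L) ^ 2 := by
      have hDneg : x * L < 0 := mul_neg_of_pos_of_neg hx0 hL
      nlinarith [mul_pos_of_neg_of_neg hDneg hDneg]
    constructor
    · rw [hd]
      apply div_nonpos_of_nonpos_of_nonneg _ hD2.le
      rw [hnum]
      have h2 : ν₀ * (L + 1 - x) ≤ 0 := mul_nonpos_of_nonneg_of_nonpos hν₀ hB.le
      linarith
    · intro hν₀pos
      rw [hd]
      apply div_neg_of_neg_of_pos _ hD2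
      rw [hnum]
      have h2 : ν₀ * (L + 1 - x) < 0 := mul_neg_of_pos_of_neg hν₀pos hB
      linarith
  refine ⟨?_, ?_⟩
  · apply antitoneOn_of_deriv_nonpos (convex_Ioo 0 1) hcont hdiff
    intro x hx
    rw [hint] at hx
    exact (key x hx).1
  · intro hν₀pos
    apply strictAntiOn_of_deriv_neg (convex_Ioo 0 1) hcont
    intro x hx
    rw [hint] at hx
    exact (key x hx).2 hν₀pos
end

section
/- Let ν₀ > 0 and ν₁ ≥ 0, and define g : (0,1) → ℝ by g(x) := ν₁ - ν₀ + (1-x)·(ν₁·x - ν₀)/(x·log x). Then g(x) → +∞ as x → 0⁺, g(x) → 0 as x → 1⁻, g(x) > 0 for all x ∈ (0,1), and for every α > 0 there exists exactly one x ∈ (0,1) with g(x) = α. -/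
open Real Filter

/-- log x < x - 1 on (0,1) -/
lemma gaux_key1 {x : ℝ} (hx : x ∈ Set.Ioo (0:ℝ) 1) : Real.log x < x - 1 :=
  Real.log_lt_sub_one_of_pos hx.1 (ne_of_lt hx.2)

/-- x - 1 < x * log x on (0,1) -/
lemma gaux_key2 {x : ℝ} (hx : x ∈ Set.Ioo (0:ℝ) 1) : x - 1 < x * Real.log x := by
  have h := Real.log_lt_sub_one_of_pos (inv_pos.mpr hx.1)
    (by rw [ne_eq, inv_eq_one]; exact ne_of_lt hx.2)
  rw [Real.log_inv] at h
  have h2 := mul_lt_mul_of_pos_left h hx.1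
  have h3 : x * x⁻¹ = 1 := mul_inv_cancel₀ (ne_of_gt hx.1)
  nlinarith

lemma gaux_D_neg {x : ℝ} (hx : x ∈ Set.Ioo (0:ℝ) 1) : x * Real.log x < 0 :=
  mul_neg_of_pos_of_neg hx.1 (Real.log_neg hx.1 hx.2)

lemma gaux_hasDerivAt (ν₀ ν₁ : ℝ) {x : ℝ} (hx : x ∈ Set.Ioo (0:ℝ) 1) :
    HasDerivAt (gFun ν₀ ν₁)
      (((ν₀ + ν₁ - 2*ν₁*x) * (x*Real.log x)
        - (1-x)*(ν₁*x-ν₀)*(Real.log x + 1)) / (x*Real.log x)^2) x := by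
  have hD : HasDerivAt (fun y : ℝ => y * Real.log y) (Real.log x + 1) x :=
    Real.hasDerivAt_mul_log (ne_of_gt hx.1)
  have h1 : HasDerivAt (fun y : ℝ => 1 - y) (-1) x := (hasDerivAt_id x).const_sub 1
  have h2 : HasDerivAt (fun y : ℝ => ν₁ * y - ν₀) ν₁ x := by
    simpa using ((hasDerivAt_id x).const_mul ν₁).sub_const ν₀
  have hN : HasDerivAt (fun y : ℝ => (1 - y) * (ν₁ * y - ν₀)) (ν₀ + ν₁ - 2*ν₁*x) x := by
    have : HasDerivAt (fun y : ℝ => (1 - y) * (ν₁ * y - ν₀)) _ x := h1.mul h2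
    convert this using 1
    ring
  have hDne : x * Real.log x ≠ 0 := ne_of_lt (gaux_D_neg hx)
  have hQ := hN.div hD hDne
  have := hQ.const_add (ν₁ - ν₀)
  exact this

lemma gaux_num_neg {ν₀ ν₁ : ℝ} (hν₀ : 0 < ν₀) (hν₁ : 0 ≤ ν₁) {x : ℝ}
    (hx : x ∈ Set.Ioo (0:ℝ) 1) :
    (ν₀ + ν₁ - 2*ν₁*x) * (x*Real.log x) - (1-x)*(ν₁*x-ν₀)*(Real.log x + 1) < 0 := by
  have h1 : 0 < x - 1 - Real.log x := by linarith [gaux_key1 hx]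
  have h2 : 0 < x * Real.log x + 1 - x := by linarith [gaux_key2 hx]
  nlinarith [mul_nonneg (mul_nonneg hν₁ hx.1.le) h2.le, mul_pos hν₀ h1]

lemma gaux_strictAntiOn (ν₀ ν₁ : ℝ) (hν₀ : 0 < ν₀) (hν₁ : 0 ≤ ν₁) :
    StrictAntiOn (gFun ν₀ ν₁) (Set.Ioo 0 1) := by
  apply strictAntiOn_of_deriv_neg (convex_Ioo 0 1)
  · exact fun x hx => (gaux_hasDerivAt ν₀ ν₁ hx).differentiableAt.continuousAt.continuousWithinAt
  · rw [interior_Ioo]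
    intro x hx
    rw [(gaux_hasDerivAt ν₀ ν₁ hx).deriv]
    apply div_neg_of_neg_of_pos (gaux_num_neg hν₀ hν₁ hx)
    exact pow_two_pos_of_ne_zero (ne_of_lt (gaux_D_neg hx))

lemma gaux_pos (ν₀ ν₁ : ℝ) (hν₀ : 0 < ν₀) (hν₁ : 0 ≤ ν₁) {x : ℝ}
    (hx : x ∈ Set.Ioo (0:ℝ) 1) : 0 < gFun ν₀ ν₁ x := by
  have hD := gaux_D_neg hx
  have hDne : x * Real.log x ≠ 0 := ne_of_lt hD
  have hrw : gFun ν₀ ν₁ x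
      = ((ν₁ - ν₀) * (x * Real.log x) + (1 - x) * (ν₁ * x - ν₀)) / (x * Real.log x) := by
    unfold gFun
    rw [add_div' _ _ _ hDne]
  rw [hrw]
  apply div_pos_of_neg_of_neg _ hD
  have h1 : Real.log x + 1 - x < 0 := by linarith [gaux_key1 hx]
  have h2 : 0 < x * Real.log x + 1 - x := by linarith [gaux_key2 hx]
  nlinarith [mul_nonneg (mul_nonneg hν₁ hx.1.le) (neg_nonneg.mpr h1.le), mul_pos hν₀ h2]

lemma gaux_tendsto_atTop (ν₀ ν₁ : ℝ) (hν₀ : 0 < ν₀) :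
    Tendsto (gFun ν₀ ν₁) (nhdsWithin 0 (Set.Ioi 0)) atTop := by
  have hD0 : Tendsto (fun x : ℝ => -(x * Real.log x)) (nhdsWithin 0 (Set.Ioi 0))
      (nhdsWithin 0 (Set.Ioi 0)) := by
    apply tendsto_nhdsWithin_of_tendsto_nhds_of_eventually_within
    · have := (Real.continuous_mul_log.neg).tendsto 0
      convert this.mono_left nhdsWithin_le_nhds using 2 <;> simp
    · filter_upwards [Ioo_mem_nhdsGT_of_mem (by norm_num : (0:ℝ) ∈ Set.Ico 0 1)] with x hx
      simpa using gaux_D_neg hx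
  have hinv : Tendsto (fun x : ℝ => (-(x * Real.log x))⁻¹) (nhdsWithin 0 (Set.Ioi 0)) atTop :=
    tendsto_inv_nhdsGT_zero.comp hD0
  have hN : Tendsto (fun x : ℝ => -((1 - x) * (ν₁ * x - ν₀))) (nhdsWithin 0 (Set.Ioi 0))
      (nhds ν₀) := by
    have : ContinuousAt (fun x : ℝ => -((1 - x) * (ν₁ * x - ν₀))) 0 := by fun_prop
    have h := this.tendsto.mono_left (nhdsWithin_le_nhds (s := Set.Ioi (0:ℝ)))
    simpa using h
  have hmul := hN.pos_mul_atTop hν₀ hinv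
  have := tendsto_atTop_add_const_left _ (ν₁ - ν₀) hmul
  apply this.congr
  intro x
  unfold gFun
  ring

lemma gaux_tendsto_zero (ν₀ ν₁ : ℝ) :
    Tendsto (gFun ν₀ ν₁) (nhdsWithin 1 (Set.Iio 1)) (nhds 0) := by
  have hslope : Tendsto (fun x : ℝ => Real.log x / (x - 1)) (nhdsWithin 1 (Set.Iio 1))
      (nhds 1) := by
    have h := (Real.hasDerivAt_log one_ne_zero)
    rw [hasDerivAt_iff_tendsto_slope] at h
    have h2 := h.mono_left (nhdsWithin_mono (1:ℝ) (fun y (hy : y ∈ Set.Iio (1:ℝ)) => ne_of_lt hy))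
    simp only [inv_one] at h2
    apply h2.congr
    intro x
    simp [slope, Real.log_one]
    ring
  have hfrac : Tendsto (fun x : ℝ => (1 - x) / Real.log x) (nhdsWithin 1 (Set.Iio 1))
      (nhds (-1)) := by
    have hinv : Tendsto (fun x : ℝ => (Real.log x / (x - 1))⁻¹) (nhdsWithin 1 (Set.Iio 1))
        (nhds 1) := by
      simpa using hslope.inv₀ one_ne_zero
    have := hinv.neg
    apply this.congr'
    filter_upwards [self_mem_nhdsWithin] with x (hx : x < 1)
    rw [inv_div, ← neg_div, neg_sub]
  have hsecond : Tendsto (fun x : ℝ => (ν₁ * x - ν₀) / x) (nhdsWithin 1 (Set.Iio 1))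
      (nhds (ν₁ - ν₀)) := by
    have : ContinuousAt (fun x : ℝ => (ν₁ * x - ν₀) / x) 1 :=
      ContinuousAt.div (by fun_prop) (by fun_prop) (by norm_num)
    have h := this.tendsto.mono_left (nhdsWithin_le_nhds (s := Set.Iio (1:ℝ)))
    simpa using h
  have hmul := hfrac.mul hsecond
  have hsum := (tendsto_const_nhds (x := ν₁ - ν₀)
      (f := nhdsWithin (1:ℝ) (Set.Iio 1))).add hmul
  have heq : (ν₁ - ν₀) + (-1) * (ν₁ - ν₀) = 0 := by ring
  rw [heq] at hsum
  apply hsum.congr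
  intro x
  unfold gFun
  rw [div_mul_div_comm]
  ring

/-- For `ν₀ > 0`: `g → +∞` at `0⁺`, `g → 0` at `1⁻`, `g > 0` on `(0,1)`, and every
`α > 0` is attained by `g` exactly once on `(0,1)`. -/
theorem gFun_limits_and_bijective (ν₀ ν₁ : ℝ) (hν₀ : 0 < ν₀) (hν₁ : 0 ≤ ν₁) :
    Tendsto (gFun ν₀ ν₁) (nhdsWithin 0 (Set.Ioi 0)) atTop
    ∧ Tendsto (gFun ν₀ ν₁) (nhdsWithin 1 (Set.Iio 1)) (nhds 0)
    ∧ (∀ x ∈ Set.Ioo (0:ℝ) 1, 0 < gFun ν₀ ν₁ x)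
    ∧ (∀ α : ℝ, 0 < α → ∃! x : ℝ, x ∈ Set.Ioo (0:ℝ) 1 ∧ gFun ν₀ ν₁ x = α) := by
  refine ⟨gaux_tendsto_atTop ν₀ ν₁ hν₀, gaux_tendsto_zero ν₀ ν₁,
    fun x hx => gaux_pos ν₀ ν₁ hν₀ hν₁ hx, ?_⟩
  intro α hα
  have hanti := gaux_strictAntiOn ν₀ ν₁ hν₀ hν₁
  have h0 := gaux_tendsto_atTop ν₀ ν₁ hν₀
  have h1 := gaux_tendsto_zero ν₀ ν₁
  have hmem0 : Set.Ioo (0:ℝ) 1 ∈ nhdsWithin (0:ℝ) (Set.Ioi 0) := by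
    rw [← Set.Ioi_inter_Iio]
    exact Filter.inter_mem self_mem_nhdsWithin
      (mem_nhdsWithin_of_mem_nhds (Iio_mem_nhds one_pos))
  have hmem1 : Set.Ioo (0:ℝ) 1 ∈ nhdsWithin (1:ℝ) (Set.Iio 1) := by
    rw [← Set.Ioi_inter_Iio]
    exact Filter.inter_mem (mem_nhdsWithin_of_mem_nhds (Ioi_mem_nhds one_pos))
      self_mem_nhdsWithin
  obtain ⟨a, ha1, ha2⟩ := ((h0.eventually_gt_atTop α).and
    (Filter.eventually_of_mem hmem0 (fun x hx => hx))).exists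
  obtain ⟨b, hb1, hb2⟩ := ((h1.eventually (Filter.eventually_of_mem (Iio_mem_nhds hα)
    (fun y hy => hy))).and (Filter.eventually_of_mem hmem1 (fun x hx => hx))).exists
  have hab : a < b := by
    rcases lt_trichotomy a b with h | h | h
    · exact h
    · rw [h] at ha1; exact absurd ha1 (by simp only [Set.mem_Iio] at hb1; linarith)
    · have := hanti hb2 ha2 h
      simp only [Set.mem_Iio] at hb1
      linarith
  have hsub : Set.Icc a b ⊆ Set.Ioo (0:ℝ) 1 := Set.Icc_subset_Ioo ha2.1 hb2.2
  have hcont : ContinuousOn (gFun ν₀ ν₁) (Set.Icc a b) := fun y hy =>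
    (gaux_hasDerivAt ν₀ ν₁ (hsub hy)).differentiableAt.continuousAt.continuousWithinAt
  have hIVT := intermediate_value_Ioo' hab.le hcont
  have hαmem : α ∈ Set.Ioo (gFun ν₀ ν₁ b) (gFun ν₀ ν₁ a) := ⟨hb1, ha1⟩
  obtain ⟨x, hx, hgx⟩ := hIVT hαmem
  have hxmem : x ∈ Set.Ioo (0:ℝ) 1 := hsub (Set.Ioo_subset_Icc_self hx)
  refine ⟨x, ⟨hxmem, hgx⟩, ?_⟩
  rintro y ⟨hymem, hgy⟩
  exact hanti.injOn hymem hxmem (hgy.trans hgx.symm)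
end

section
/- Let ν₀ > 0, ν₁ ≥ 0 and α > 0, and define f_α : (0,1) → ℝ by f_α(x) := (1/(1-x))·((ν₁·x - ν₀)·log x - α·x·log x - α·(1-x)·log(1-x)). Then f_α(x) → +∞ as x → 0⁺ and as x → 1⁻, and f_α attains its minimum over (0,1) precisely at the unique point x₀ ∈ (0,1) satisfying g(x₀) = α, where g(x) := ν₁ - ν₀ + (1-x)·(ν₁·x - ν₀)/(x·log x). -/
open Real Filter Set Topology

/-- The entropy-production functional `f_α` evaluated on thermal states with
geometric parameter `x`. -/
noncomputable def fAlpha (ν₀ ν₁ α : ℝ) (x : ℝ) : ℝ :=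
  1 / (1 - x) * ((ν₁ * x - ν₀) * Real.log x - α * x * Real.log x
    - α * (1 - x) * Real.log (1 - x))

lemma aux_xlog {x : ℝ} (h0 : 0 < x) (h1 : x < 1) : x - 1 - x * Real.log x < 0 := by
  have h := Real.log_lt_sub_one_of_pos (inv_pos.mpr h0) (by
    intro h; rw [inv_eq_one] at h; exact h1.ne h)
  rw [Real.log_inv] at h
  have := mul_lt_mul_of_pos_left h h0
  have hx : x * x⁻¹ = 1 := mul_inv_cancel₀ h0.ne'
  nlinarith

lemma log_ne {x : ℝ} (h0 : 0 < x) (h1 : x < 1) : Real.log x ≠ 0 := (Real.log_neg h0 h1).ne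

lemma hasDerivAt_gFun {ν₀ ν₁ : ℝ} {x : ℝ} (h0 : 0 < x) (h1 : x < 1) :
    HasDerivAt (gFun ν₀ ν₁)
      ((((-1) * (ν₁ * x - ν₀) + (1 - x) * ν₁) * (x * Real.log x)
        - (1 - x) * (ν₁ * x - ν₀) * (Real.log x + 1)) / (x * Real.log x) ^ 2) x := by
  have h1' : HasDerivAt (fun y : ℝ => 1 - y) (-1) x := by
    simpa using (hasDerivAt_id x).const_sub 1
  have h2' : HasDerivAt (fun y : ℝ => ν₁ * y - ν₀) ν₁ x := by
    simpa using ((hasDerivAt_id x).const_mul ν₁).sub_const ν₀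
  have hu := h1'.mul h2'
  have hv : HasDerivAt (fun y : ℝ => y * Real.log y) (Real.log x + 1) x :=
    Real.hasDerivAt_mul_log h0.ne'
  have hvne : x * Real.log x ≠ 0 := mul_ne_zero h0.ne' (log_ne h0 h1)
  have := (hu.div hv hvne).const_add (ν₁ - ν₀)
  exact this

lemma gderiv_neg {ν₀ ν₁ : ℝ} (hν₀ : 0 < ν₀) (hν₁ : 0 ≤ ν₁) {x : ℝ} (h0 : 0 < x) (h1 : x < 1) :
    (((-1) * (ν₁ * x - ν₀) + (1 - x) * ν₁) * (x * Real.log x)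
        - (1 - x) * (ν₁ * x - ν₀) * (Real.log x + 1)) / (x * Real.log x) ^ 2 < 0 := by
  have hvne : x * Real.log x ≠ 0 := mul_ne_zero h0.ne' (log_ne h0 h1)
  apply div_neg_of_neg_of_pos
  · have e : ((-1) * (ν₁ * x - ν₀) + (1 - x) * ν₁) * (x * Real.log x)
        - (1 - x) * (ν₁ * x - ν₀) * (Real.log x + 1)
        = ν₁ * (x * (x - 1 - x * Real.log x)) + ν₀ * (Real.log x + 1 - x) := by ring
    rw [e]
    have t1 : ν₁ * (x * (x - 1 - x * Real.log x)) ≤ 0 :=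
      mul_nonpos_of_nonneg_of_nonpos hν₁ (mul_nonpos_of_nonneg_of_nonpos h0.le (aux_xlog h0 h1).le)
    have t2 : ν₀ * (Real.log x + 1 - x) < 0 :=
      mul_neg_of_pos_of_neg hν₀ (by have := Real.log_lt_sub_one_of_pos h0 h1.ne; linarith)
    linarith
  · positivity

lemma gFun_strictAntiOn {ν₀ ν₁ : ℝ} (hν₀ : 0 < ν₀) (hν₁ : 0 ≤ ν₁) :
    StrictAntiOn (gFun ν₀ ν₁) (Set.Ioo 0 1) := by
  apply strictAntiOn_of_deriv_neg (convex_Ioo 0 1)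
  · exact fun x hx =>
      (hasDerivAt_gFun hx.1 hx.2).differentiableAt.continuousAt.continuousWithinAt
  · rw [interior_Ioo]
    intro x hx
    rw [(hasDerivAt_gFun hx.1 hx.2).deriv]
    exact gderiv_neg hν₀ hν₁ hx.1 hx.2


lemma hasDerivAt_fAlpha {ν₀ ν₁ α : ℝ} {x : ℝ} (h0 : 0 < x) (h1 : x < 1) :
    HasDerivAt (fAlpha ν₀ ν₁ α)
      (Real.log x * (gFun ν₀ ν₁ x - α) / (1 - x) ^ 2) x := by
  have hx1 : (1:ℝ) - x ≠ 0 := sub_ne_zero.mpr (by linarith)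
  have hlog : HasDerivAt Real.log x⁻¹ x := Real.hasDerivAt_log h0.ne'
  have h1' : HasDerivAt (fun y : ℝ => 1 - y) (-1) x := by
    simpa using (hasDerivAt_id x).const_sub 1
  have hM : HasDerivAt (fun y : ℝ => Real.log (1 - y)) ((1 - x)⁻¹ * (-1)) x :=
    (Real.hasDerivAt_log hx1).comp x h1'
  have hn1 : HasDerivAt (fun y : ℝ => (ν₁ * y - ν₀) * Real.log y)
      (ν₁ * Real.log x + (ν₁ * x - ν₀) * x⁻¹) x := by
    have h2' : HasDerivAt (fun y : ℝ => ν₁ * y - ν₀) ν₁ x := by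
      simpa using ((hasDerivAt_id x).const_mul ν₁).sub_const ν₀
    exact h2'.mul hlog
  have hn2 : HasDerivAt (fun y : ℝ => α * y * Real.log y)
      (α * Real.log x + (α * x) * x⁻¹) x := by
    have h2' : HasDerivAt (fun y : ℝ => α * y) α x := by
      simpa using (hasDerivAt_id x).const_mul α
    exact h2'.mul hlog
  have hn3 : HasDerivAt (fun y : ℝ => α * (1 - y) * Real.log (1 - y))
      ((α * (-1)) * Real.log (1 - x) + (α * (1 - x)) * ((1 - x)⁻¹ * (-1))) x := by
    have h2' : HasDerivAt (fun y : ℝ => α * (1 - y)) (α * (-1)) x := h1'.const_mul α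
    exact h2'.mul hM
  have hN := (hn1.sub hn2).sub hn3
  have hc : HasDerivAt (fun y : ℝ => 1 / (1 - y))
      ((0 * (1 - x) - 1 * (-1)) / (1 - x) ^ 2) x :=
    (hasDerivAt_const x 1).div h1' hx1
  have H := hc.mul hN
  have : fAlpha ν₀ ν₁ α = fun y : ℝ => 1 / (1 - y) * ((ν₁ * y - ν₀) * Real.log y
      - α * y * Real.log y - α * (1 - y) * Real.log (1 - y)) := rfl
  rw [this]
  convert H using 1
  · rfl
  · rfl
  · rfl
  unfold gFun
  simp only [Pi.sub_apply]
  field_simp [h0.ne', hx1, log_ne h0 h1]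
  ring


lemma slope_log_tendsto : Tendsto (fun x : ℝ => Real.log x / (x - 1)) (𝓝[<] 1) (𝓝 1) := by
  have h := hasDerivAt_iff_tendsto_slope.mp (Real.hasDerivAt_log one_ne_zero)
  rw [inv_one] at h
  have h' := h.mono_left (nhdsWithin_mono 1 (fun y hy => ne_of_lt hy))
  refine h'.congr (fun y => ?_)
  simp [slope_def_field]

lemma fAlpha_tendsto_zero {ν₀ ν₁ α : ℝ} (hν₀ : 0 < ν₀) :
    Tendsto (fAlpha ν₀ ν₁ α) (𝓝[>] 0) atTop := by
  have h1 : Tendsto (fun x : ℝ => (ν₁ * x - ν₀) * Real.log x) (𝓝[>] 0) atTop := by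
    refine Filter.Tendsto.neg_mul_atBot (C := -ν₀) (by linarith) ?_
      Real.tendsto_log_nhdsGT_zero
    have : Tendsto (fun x : ℝ => ν₁ * x - ν₀) (𝓝 0) (𝓝 (ν₁ * 0 - ν₀)) :=
      ((continuous_const.mul continuous_id).sub continuous_const).tendsto 0
    simpa using this.mono_left nhdsWithin_le_nhds
  have h2 : Tendsto (fun x : ℝ => α * x * Real.log x) (𝓝[>] 0) (𝓝 0) := by
    have hc : Continuous fun x : ℝ => α * x * Real.log x := by
      have : Continuous fun x : ℝ => α * (x * Real.log x) :=
        continuous_const.mul Real.continuous_mul_log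
      simpa [mul_assoc] using this
    have := hc.tendsto 0
    simpa using this.mono_left nhdsWithin_le_nhds
  have h3 : Tendsto (fun x : ℝ => α * (1 - x) * Real.log (1 - x)) (𝓝[>] 0) (𝓝 0) := by
    have hc : Continuous fun x : ℝ => α * ((1 - x) * Real.log (1 - x)) :=
      continuous_const.mul (Real.continuous_mul_log.comp (continuous_const.sub continuous_id))
    have := hc.tendsto 0
    simp only [sub_zero, Real.log_one, mul_zero, mul_one] at this
    refine Tendsto.congr (fun x => by ring) (this.mono_left nhdsWithin_le_nhds)
  have hN : Tendsto (fun x : ℝ => (ν₁ * x - ν₀) * Real.log x - α * x * Real.log x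
      - α * (1 - x) * Real.log (1 - x)) (𝓝[>] 0) atTop := by
    have := (h1.atTop_add h2.neg).atTop_add h3.neg
    refine this.congr (fun x => by ring)
  have hc1 : Tendsto (fun x : ℝ => 1 / (1 - x)) (𝓝[>] 0) (𝓝 1) := by
    have : Tendsto (fun x : ℝ => 1 / (1 - x)) (𝓝 0) (𝓝 (1 / (1 - 0))) :=
      (continuousAt_const.div (continuous_const.sub continuous_id).continuousAt (by norm_num))
    simpa using this.mono_left nhdsWithin_le_nhds
  exact hc1.pos_mul_atTop one_pos hN

lemma fAlpha_tendsto_one {ν₀ ν₁ α : ℝ} (hα : 0 < α) :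
    Tendsto (fAlpha ν₀ ν₁ α) (𝓝[<] 1) atTop := by
  have hfirst : Tendsto (fun x : ℝ => (-(ν₁ * x - ν₀ - α * x)) * (Real.log x / (x - 1)))
      (𝓝[<] 1) (𝓝 ((-(ν₁ * 1 - ν₀ - α * 1)) * 1)) := by
    refine Tendsto.mul ?_ slope_log_tendsto
    have : Tendsto (fun x : ℝ => -(ν₁ * x - ν₀ - α * x)) (𝓝 1) (𝓝 (-(ν₁ * 1 - ν₀ - α * 1))) := by
      exact (((continuous_const.mul continuous_id).sub continuous_const).sub
        (continuous_const.mul continuous_id)).neg.tendsto 1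
    exact this.mono_left nhdsWithin_le_nhds
  have h1x : Tendsto (fun x : ℝ => 1 - x) (𝓝[<] 1) (𝓝[>] 0) := by
    rw [tendsto_nhdsWithin_iff]
    constructor
    · have : Tendsto (fun x : ℝ => 1 - x) (𝓝 1) (𝓝 (1 - 1)) :=
        (continuous_const.sub continuous_id).tendsto 1
      simpa using this.mono_left nhdsWithin_le_nhds
    · filter_upwards [self_mem_nhdsWithin] with x (hx : x < 1)
      simp [hx]
  have hsecond : Tendsto (fun x : ℝ => (-α) * Real.log (1 - x)) (𝓝[<] 1) atTop :=
    Filter.Tendsto.neg_mul_atBot (by linarith) tendsto_const_nhds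
      (Real.tendsto_log_nhdsGT_zero.comp h1x)
  have := hfirst.add_atTop hsecond
  refine this.congr' ?_
  filter_upwards [self_mem_nhdsWithin] with x (hx : x < 1)
  have hx1 : (1:ℝ) - x ≠ 0 := sub_ne_zero.mpr (by linarith)
  have hx1' : x - 1 ≠ 0 := sub_ne_zero.mpr (by linarith)
  unfold fAlpha
  field_simp
  ring

lemma gFun_tendsto_zero {ν₀ ν₁ : ℝ} (hν₀ : 0 < ν₀) :
    Tendsto (gFun ν₀ ν₁) (𝓝[>] 0) atTop := by
  have hv : Tendsto (fun x : ℝ => -(x * Real.log x)) (𝓝[>] 0) (𝓝[>] 0) := by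
    rw [tendsto_nhdsWithin_iff]
    constructor
    · have := Real.continuous_mul_log.neg.tendsto 0
      simpa [Pi.neg_def] using this.mono_left nhdsWithin_le_nhds
    · filter_upwards [Ioo_mem_nhdsGT_of_mem (α := ℝ) ⟨le_refl 0, one_pos⟩] with x hx
      have : x * Real.log x < 0 := mul_neg_of_pos_of_neg hx.1 (Real.log_neg hx.1 hx.2)
      simpa using this
  have hvinv : Tendsto (fun x : ℝ => (x * Real.log x)⁻¹) (𝓝[>] 0) atBot := by
    have h := hv.inv_tendsto_nhdsGT_zero
    have := tendsto_neg_atTop_atBot.comp h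
    refine this.congr (fun x => ?_)
    simp [Function.comp, mul_inv, neg_inv]
  have hu : Tendsto (fun x : ℝ => (1 - x) * (ν₁ * x - ν₀)) (𝓝[>] 0) (𝓝 (-ν₀)) := by
    have : Tendsto (fun x : ℝ => (1 - x) * (ν₁ * x - ν₀)) (𝓝 0)
        (𝓝 ((1 - 0) * (ν₁ * 0 - ν₀))) :=
      ((continuous_const.sub continuous_id).mul
        ((continuous_const.mul continuous_id).sub continuous_const)).tendsto 0
    simpa using this.mono_left nhdsWithin_le_nhds
  have hdiv := Filter.Tendsto.neg_mul_atBot (C := -ν₀) (by linarith) hu hvinv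
  have : Tendsto (fun x : ℝ => (1 - x) * (ν₁ * x - ν₀) / (x * Real.log x)) (𝓝[>] 0) atTop :=
    hdiv.congr (fun x => (div_eq_mul_inv _ _).symm)
  exact tendsto_atTop_add_const_left _ (ν₁ - ν₀) this

lemma gFun_tendsto_one {ν₀ ν₁ : ℝ} :
    Tendsto (gFun ν₀ ν₁) (𝓝[<] 1) (𝓝 0) := by
  have hs : Tendsto (fun x : ℝ => (1 - x) / Real.log x) (𝓝[<] 1) (𝓝 (-1)) := by
    have h := (slope_log_tendsto.inv₀ one_ne_zero).neg
    rw [inv_one] at h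
    refine h.congr (fun x => ?_)
    rw [← inv_div]
    field_simp
    ring
  have hr : Tendsto (fun x : ℝ => (ν₁ * x - ν₀) / x) (𝓝[<] 1) (𝓝 (ν₁ - ν₀)) := by
    have : Tendsto (fun x : ℝ => (ν₁ * x - ν₀) / x) (𝓝 1) (𝓝 ((ν₁ * 1 - ν₀) / 1)) :=
      (((continuous_const.mul continuous_id).sub continuous_const).continuousAt.div
        continuous_id.continuousAt one_ne_zero)
    simpa using this.mono_left nhdsWithin_le_nhds
  have hmul := hs.mul hr
  have : Tendsto (fun x : ℝ => (1 - x) * (ν₁ * x - ν₀) / (x * Real.log x)) (𝓝[<] 1)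
      (𝓝 (-1 * (ν₁ - ν₀))) := by
    refine hmul.congr (fun x => ?_)
    rw [div_mul_div_comm]
    ring_nf
  have h2 := this.const_add (ν₁ - ν₀)
  have : Tendsto (gFun ν₀ ν₁) (𝓝[<] 1) (𝓝 (ν₁ - ν₀ + -1 * (ν₁ - ν₀))) := h2
  simpa using this

/-- `f_α → +∞` at both endpoints of `(0,1)`, and `f_α` attains its minimum over `(0,1)`
precisely at the unique point `x₀ ∈ (0,1)` with `g(x₀) = α`. -/
theorem fAlpha_min_at_critical_point (ν₀ ν₁ α : ℝ) (hν₀ : 0 < ν₀) (hν₁ : 0 ≤ ν₁)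
    (hα : 0 < α) :
    Tendsto (fAlpha ν₀ ν₁ α) (nhdsWithin 0 (Set.Ioi 0)) atTop
    ∧ Tendsto (fAlpha ν₀ ν₁ α) (nhdsWithin 1 (Set.Iio 1)) atTop
    ∧ ∃ x₀ : ℝ, x₀ ∈ Set.Ioo (0:ℝ) 1 ∧ gFun ν₀ ν₁ x₀ = α
        ∧ (∀ x ∈ Set.Ioo (0:ℝ) 1, x ≠ x₀ → fAlpha ν₀ ν₁ α x₀ < fAlpha ν₀ ν₁ α x)
        ∧ (∀ x ∈ Set.Ioo (0:ℝ) 1, gFun ν₀ ν₁ x = α → x = x₀) := by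
  refine ⟨fAlpha_tendsto_zero hν₀, fAlpha_tendsto_one hα, ?_⟩
  have hGanti := gFun_strictAntiOn (ν₀ := ν₀) (ν₁ := ν₁) hν₀ hν₁
  obtain ⟨a, hga, haI⟩ := (((gFun_tendsto_zero hν₀).eventually_gt_atTop α).and
    (eventually_of_mem (Ioo_mem_nhdsGT_of_mem (α := ℝ) ⟨le_refl 0, one_pos⟩) (fun x hx => hx))).exists
  obtain ⟨b, hgb, hbI⟩ := (((gFun_tendsto_one (ν₀ := ν₀) (ν₁ := ν₁)).eventually_lt_const hα).and
    (eventually_of_mem (Ioo_mem_nhdsLT_of_mem (α := ℝ) ⟨one_pos, le_refl 1⟩) (fun x hx => hx))).exists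
  have hab : a < b := by
    rcases lt_trichotomy a b with h | h | h
    · exact h
    · exfalso; rw [h] at hga; linarith
    · exact absurd (hGanti hbI haI h) (by linarith)
  have hsub : Icc a b ⊆ Ioo 0 1 := fun x hx =>
    ⟨lt_of_lt_of_le haI.1 hx.1, lt_of_le_of_lt hx.2 hbI.2⟩
  have hcont : ContinuousOn (gFun ν₀ ν₁) (Icc a b) := fun x hx =>
    ((hasDerivAt_gFun (hsub hx).1 (hsub hx).2).differentiableAt.continuousAt).continuousWithinAt
  obtain ⟨x₀, hx₀I, hgx₀⟩ := intermediate_value_Icc' hab.le hcont ⟨hgb.le, hga.le⟩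
  have hx₀ : x₀ ∈ Ioo (0:ℝ) 1 := hsub hx₀I
  have hcontf : ContinuousOn (fAlpha ν₀ ν₁ α) (Ioo 0 1) := fun y hy =>
    ((hasDerivAt_fAlpha (ν₀ := ν₀) (ν₁ := ν₁) (α := α)
      hy.1 hy.2).differentiableAt.continuousAt).continuousWithinAt
  refine ⟨x₀, hx₀, hgx₀, ?_, ?_⟩
  · intro x hx hxne
    rcases lt_or_gt_of_ne hxne with hlt | hgt
    · have hA : StrictAntiOn (fAlpha ν₀ ν₁ α) (Ioc 0 x₀) := by
        apply strictAntiOn_of_deriv_neg (convex_Ioc 0 x₀)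
        · exact hcontf.mono (fun y hy => ⟨hy.1, lt_of_le_of_lt hy.2 hx₀.2⟩)
        · rw [interior_Ioc]
          intro y hy
          have hy1 : y < 1 := lt_trans hy.2 hx₀.2
          rw [(hasDerivAt_fAlpha hy.1 hy1).deriv]
          apply div_neg_of_neg_of_pos
          · apply mul_neg_of_neg_of_pos (Real.log_neg hy.1 hy1)
            have : gFun ν₀ ν₁ x₀ < gFun ν₀ ν₁ y := hGanti ⟨hy.1, hy1⟩ hx₀ hy.2
            rw [hgx₀] at this
            linarith
          · exact pow_pos (by linarith) 2
      exact hA ⟨hx.1, hlt.le⟩ ⟨hx₀.1, le_refl x₀⟩ hlt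
    · have hM : StrictMonoOn (fAlpha ν₀ ν₁ α) (Ico x₀ 1) := by
        apply strictMonoOn_of_deriv_pos (convex_Ico x₀ 1)
        · exact hcontf.mono (fun y hy => ⟨lt_of_lt_of_le hx₀.1 hy.1, hy.2⟩)
        · rw [interior_Ico]
          intro y hy
          have hy0 : 0 < y := lt_trans hx₀.1 hy.1
          rw [(hasDerivAt_fAlpha hy0 hy.2).deriv]
          apply div_pos
          · apply mul_pos_of_neg_of_neg (Real.log_neg hy0 hy.2)
            have : gFun ν₀ ν₁ y < gFun ν₀ ν₁ x₀ := hGanti hx₀ ⟨hy0, hy.2⟩ hy.1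
            rw [hgx₀] at this
            linarith
          · exact pow_pos (by linarith [hy.2]) 2
      exact hM ⟨le_refl x₀, hx₀.2⟩ ⟨hgt.le, hx.2⟩ hgt
  · intro x hx hgx
    exact hGanti.injOn hx hx₀ (hgx.trans hgx₀.symm)
end
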